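/- arXiv:1806.10791 — 2 statements merged into one kernel-verified Lean document; each statement's English description precedes it below -/
import Mathlib

section
/- The set W̃ is a subgroup of N_W(W_Σ), and the normaliser N_W(W_Σ) is the (internal) semidirect product of W̃ and W_Σ: W̃ ∩ W_Σ = {e}, W̃ normalises W_Σ, and the multiplication map W̃ × W_Σ → N_W(W_Σ), (w, u) ↦ w u, is a bijection; in particular W̃ maps isomorphically onto the quotient group N_W(W_Σ) / W_Σ. -/
/-!
Relative Coxeter groups: common definitions.

`(W, S)` is a Coxeter system (Mathlib's `CoxeterSystem M W`), `ℓ = cs.length`.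
For `w : W`, `invSet cs w` is the set `T(w)` of left inversions of `w`, and
`descSet cs w = T(w) ∩ S` is `D(w)`.  For a subset `Sg ⊆ S` (playing the role of `Σ`),
`par Sg` is the standard parabolic subgroup `W_Σ`, `parRefl Sg` its set of
reflections `T_Σ`, `minRight cs Sg = W^Σ`, `minLeft cs Sg = ^ΣW`,
`relN cs Sg Sg' = N(Σ, Σ')`, `IsLongest cs Sg w` says `w` is a longest element of `W_Σ`,
`longest cs Sg` is the longest element `w₀^Σ`, `relW cs Sg = W̃`,
`complSet cs Sg = Σ^∁`, `tilde cs Sg s = s̃ = w₀^{Σ∪{s}} w₀^Σ`, `relS cs Sg = S̃`,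
`relLength cs Sg = ℓ̃ : W → ℕ∞`, and `GoodSubset cs Sg` records the standing
hypotheses (1) and (2) on `Σ`.
-/

namespace RelativeCoxeter

variable {B W : Type*} [Group W] {M : CoxeterMatrix B}

open CoxeterSystem
open scoped Classical

/-- The basic sign-flipping function underlying the reflection cocycle. -/
noncomputable def etaFun (cs : CoxeterSystem M W) (i : B) : W × ℤˣ → W × ℤˣ :=
  fun x => (cs.simple i * x.1 * cs.simple i, if x.1 = cs.simple i then -x.2 else x.2)

theorem etaFun_involutive (cs : CoxeterSystem M W) (i : B) :
    Function.Involutive (etaFun cs i) := by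
  rintro ⟨t, e⟩
  unfold etaFun
  have h1 : cs.simple i * (cs.simple i * t * cs.simple i) * cs.simple i = t := by
    rw [← mul_assoc, ← mul_assoc, cs.simple_mul_simple_self, one_mul,
      mul_assoc, cs.simple_mul_simple_self, mul_one]
  by_cases ht : t = cs.simple i
  · subst ht
    simp [cs.simple_mul_simple_self, cs.simple_mul_simple_cancel_right]
  · have h2 : cs.simple i * t * cs.simple i ≠ cs.simple i := by
      intro h
      apply ht
      have := congrArg (fun z => cs.simple i * z * cs.simple i) h
      simpa [h1, cs.simple_mul_simple_self] using this
    simp [ht, h2, h1]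

/-- The sign permutation attached to a simple reflection. -/
noncomputable def eta (cs : CoxeterSystem M W) (i : B) : Equiv.Perm (W × ℤˣ) :=
  (etaFun_involutive cs i).toPerm

theorem eta_apply (cs : CoxeterSystem M W) (i : B) (t : W) (e : ℤˣ) :
    eta cs i (t, e) = (cs.simple i * t * cs.simple i, if t = cs.simple i then -e else e) := rfl


private theorem conj_eq_iff {x t u : W} (hx : x * x = 1) : x * t * x = u ↔ t = x * u * x := by
  constructor
  · rintro rfl
    rw [← mul_assoc, ← mul_assoc, hx, one_mul, mul_assoc, hx, mul_one]
  · rintro rfl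
    rw [← mul_assoc, ← mul_assoc, hx, one_mul, mul_assoc, hx, mul_one]

private theorem conj_eq_iff₂ {x y t u : W} (hxy : x * y = 1) (hyx : y * x = 1) :
    x * t * y = u ↔ t = y * u * x := by
  constructor
  · rintro rfl
    rw [← mul_assoc, ← mul_assoc, hyx, one_mul, mul_assoc, hyx, mul_one]
  · rintro rfl
    rw [← mul_assoc, ← mul_assoc, hxy, one_mul, mul_assoc, hxy, mul_one]

section Braid

variable (cs : CoxeterSystem M W) (i i' : B)

theorem eta_pow_apply (k : ℕ) (t : W) (e : ℤˣ) :
    ((eta cs i * eta cs i') ^ k) (t, e) =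
      ((cs.simple i * cs.simple i') ^ k * t * (cs.simple i' * cs.simple i) ^ k,
        e * ∏ r ∈ Finset.range (2 * k),
          (if t = (cs.simple i' * cs.simple i) ^ (r + 1) * cs.simple i then (-1 : ℤˣ) else 1)) := by
  set a := cs.simple i with ha
  set b := cs.simple i' with hb
  have haa : a * a = 1 := cs.simple_mul_simple_self i
  have hbb : b * b = 1 := cs.simple_mul_simple_self i'
  have hab : (a * b) * (b * a) = 1 := by
    rw [mul_assoc, ← mul_assoc b b a, hbb, one_mul, haa]
  have hba : (b * a) * (a * b) = 1 := by
    rw [mul_assoc, ← mul_assoc a a b, haa, one_mul, hbb]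
  have p1 : ∀ n : ℕ, ((b * a) ^ (n + 1) * a : W) = (b * a) ^ n * b := by
    intro n
    rw [pow_succ, mul_assoc]
    congr 1
    rw [mul_assoc, haa, mul_one]
  induction k generalizing t e with
  | zero => simp
  | succ k ih =>
    have e0 : ((b * a) ^ 1 * a : W) = b := by rw [p1, pow_zero, one_mul]
    have e1 : ((b * a) ^ 2 * a : W) = b * a * b := by
      rw [p1, pow_one]
    have hstep : (eta cs i * eta cs i') (t, e) =
        ((a * b) * t * (b * a),
          e * ((if t = (b * a) ^ 1 * a then (-1 : ℤˣ) else 1)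
            * (if t = (b * a) ^ 2 * a then (-1 : ℤˣ) else 1))) := by
      rw [Equiv.Perm.mul_apply, eta_apply, eta_apply]
      rw [← ha, ← hb]
      have c1 : (b * t * b = a) ↔ (t = (b * a) ^ 2 * a) := by
        rw [e1, conj_eq_iff hbb, mul_assoc b a b]
      have cfst : a * (b * t * b) * a = a * b * t * (b * a) := by
        simp only [mul_assoc]
      refine Prod.ext cfst ?_
      show (if b * t * b = a then -(if t = b then -e else e) else (if t = b then -e else e)) = _
      simp only [c1, e0]
      split_ifs <;> simp
    rw [pow_succ, Equiv.Perm.mul_apply, hstep, ih]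
    have cond : ∀ r : ℕ, ((a * b) * t * (b * a) = (b * a) ^ (r + 1) * a)
        ↔ (t = (b * a) ^ (r + 3) * a) := by
      intro r
      rw [conj_eq_iff₂ hab hba]
      have : ((b * a) * ((b * a) ^ (r + 1) * a) * (a * b) : W) = (b * a) ^ (r + 3) * a := by
        rw [p1 r, p1 (r + 2), ← mul_assoc (b * a) ((b * a) ^ r) b, ← pow_succ']
        rw [pow_succ ((b * a)) (r + 1)]
        simp only [mul_assoc]
      rw [this]
    refine Prod.ext ?_ ?_
    · show (a * b) ^ k * ((a * b) * t * (b * a)) * (b * a) ^ k = (a * b) ^ (k + 1) * t * (b * a) ^ (k + 1)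
      rw [pow_succ, pow_succ' (b * a) k]
      simp only [mul_assoc]
    · show e * ((if t = (b * a) ^ 1 * a then (-1 : ℤˣ) else 1)
            * (if t = (b * a) ^ 2 * a then (-1 : ℤˣ) else 1)) *
          ∏ r ∈ Finset.range (2 * k),
            (if (a * b) * t * (b * a) = (b * a) ^ (r + 1) * a then (-1 : ℤˣ) else 1) = _
      have : ∀ r ∈ Finset.range (2 * k),
          (if (a * b) * t * (b * a) = (b * a) ^ (r + 1) * a then (-1 : ℤˣ) else 1)
            = (if t = (b * a) ^ (r + 2 + 1) * a then (-1 : ℤˣ) else 1) := by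
        intro r _
        rw [cond r]
      rw [Finset.prod_congr rfl this]
      have h2k : 2 * (k + 1) = (2 * k + 1) + 1 := by ring
      rw [h2k, Finset.prod_range_succ', Finset.prod_range_succ']
      have pe : (∏ x ∈ Finset.range (2 * k),
            if t = (b * a) ^ (x + 1 + 1 + 1) * a then (-1 : ℤˣ) else 1)
          = ∏ x ∈ Finset.range (2 * k),
            if t = (b * a) ^ (x + 2 + 1) * a then (-1 : ℤˣ) else 1 :=
        Finset.prod_congr rfl (fun x _ => by norm_num)
      rw [pe]
      simp only [Nat.zero_add, one_add_one_eq_two, mul_assoc]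
      ac_rfl

theorem eta_liftable : M.IsLiftable (eta cs) := by
  intro i i'
  apply Equiv.ext
  rintro ⟨t, e⟩
  rw [eta_pow_apply]
  have hp : (cs.simple i * cs.simple i') ^ M i i' = 1 := cs.simple_mul_simple_pow i i'
  have hq : (cs.simple i' * cs.simple i) ^ M i i' = 1 := cs.simple_mul_simple_pow' i i'
  have hprod : (∏ r ∈ Finset.range (2 * M i i'),
      (if t = (cs.simple i' * cs.simple i) ^ (r + 1) * cs.simple i then (-1 : ℤˣ) else 1)) = 1 := by
    rw [two_mul, Finset.prod_range_add]
    have : ∀ r ∈ Finset.range (M i i'),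
        (if t = (cs.simple i' * cs.simple i) ^ (M i i' + r + 1) * cs.simple i then (-1 : ℤˣ) else 1)
          = (if t = (cs.simple i' * cs.simple i) ^ (r + 1) * cs.simple i then (-1 : ℤˣ) else 1) := by
      intro r _
      have : ((cs.simple i' * cs.simple i) ^ (M i i' + r + 1) : W)
          = (cs.simple i' * cs.simple i) ^ (r + 1) := by
        rw [add_assoc, pow_add, hq, one_mul]
      rw [this]
    rw [Finset.prod_congr rfl this, Int.units_mul_self]
  rw [hp, hq, hprod]
  simp

end Braid

section Cocycle

variable (cs : CoxeterSystem M W)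

/-- The reflection-cocycle homomorphism. -/
noncomputable def phi : W →* Equiv.Perm (W × ℤˣ) := cs.lift ⟨eta cs, eta_liftable cs⟩

/-- The sign cocycle: `nsgn cs w t = -1` iff `t` is a "right inversion direction" of `w`. -/
noncomputable def nsgn (w t : W) : ℤˣ := ((phi cs w) (t, 1)).2

theorem phi_simple (i : B) : phi cs (cs.simple i) = eta cs i :=
  cs.lift_apply_simple (eta_liftable cs) i

theorem phi_fst (w t : W) (e : ℤˣ) : ((phi cs w) (t, e)).1 = w * t * w⁻¹ := by
  obtain ⟨ω, rfl⟩ := cs.wordProd_surjective w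
  induction ω generalizing t e with
  | nil => simp [CoxeterSystem.wordProd_nil]
  | cons j ω ih =>
    rw [CoxeterSystem.wordProd_cons, map_mul, Equiv.Perm.mul_apply, phi_simple]
    have h : (phi cs (cs.wordProd ω)) (t, e)
        = ((cs.wordProd ω) * t * (cs.wordProd ω)⁻¹, ((phi cs (cs.wordProd ω)) (t, e)).2) := by
      exact Prod.ext (ih t e) rfl
    rw [h, eta_apply]
    simp only [mul_inv_rev, CoxeterSystem.inv_simple]
    simp only [mul_assoc]

theorem phi_snd (w t : W) (e : ℤˣ) : ((phi cs w) (t, e)).2 = e * nsgn cs w t := by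
  obtain ⟨ω, rfl⟩ := cs.wordProd_surjective w
  induction ω generalizing t e with
  | nil => simp [CoxeterSystem.wordProd_nil, nsgn]
  | cons j ω ih =>
    rw [CoxeterSystem.wordProd_cons]
    have key : ∀ e' : ℤˣ, ((phi cs (cs.simple j * cs.wordProd ω)) (t, e')).2
        = e' * (if (cs.wordProd ω) * t * (cs.wordProd ω)⁻¹ = cs.simple j then -(nsgn cs (cs.wordProd ω) t) else nsgn cs (cs.wordProd ω) t) := by
      intro e'
      rw [map_mul, Equiv.Perm.mul_apply, phi_simple]
      have h : (phi cs (cs.wordProd ω)) (t, e')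
          = ((cs.wordProd ω) * t * (cs.wordProd ω)⁻¹, e' * nsgn cs (cs.wordProd ω) t) :=
        Prod.ext (phi_fst cs _ t e') (ih t e')
      rw [h, eta_apply]
      split_ifs <;> simp
    rw [key e]
    have : nsgn cs (cs.simple j * cs.wordProd ω) t
        = ((phi cs (cs.simple j * cs.wordProd ω)) (t, 1)).2 := rfl
    rw [this, key 1, one_mul]

theorem phi_apply (w t : W) (e : ℤˣ) :
    (phi cs w) (t, e) = (w * t * w⁻¹, e * nsgn cs w t) :=
  Prod.ext (phi_fst cs w t e) (phi_snd cs w t e)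

theorem nsgn_one (t : W) : nsgn cs 1 t = 1 := by
  simp [nsgn]

theorem nsgn_mul (w u t : W) :
    nsgn cs (w * u) t = nsgn cs u t * nsgn cs w (u * t * u⁻¹) := by
  have : (phi cs (w * u)) (t, 1) = (phi cs w) ((phi cs u) (t, 1)) := by
    rw [map_mul, Equiv.Perm.mul_apply]
  have h2 : (phi cs u) (t, 1) = (u * t * u⁻¹, nsgn cs u t) := by
    rw [phi_apply, one_mul]
  rw [nsgn, this, h2, phi_apply]

theorem nsgn_simple (i : B) (t : W) :
    nsgn cs (cs.simple i) t = if t = cs.simple i then -1 else 1 := by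
  rw [nsgn, phi_simple, eta_apply]

theorem nsgn_sq (u : ℤˣ) : u * u = 1 := Int.units_mul_self u

theorem nsgn_inv (w t : W) : nsgn cs w⁻¹ t = nsgn cs w (w⁻¹ * t * w) := by
  have h := nsgn_mul cs w w⁻¹ t
  rw [mul_inv_cancel, nsgn_one, inv_inv] at h
  have h2 := congrArg (fun z => nsgn cs w⁻¹ t * z) h.symm
  have h3 : nsgn cs w (w⁻¹ * t * w) = nsgn cs w⁻¹ t := by
    simpa [← mul_assoc, nsgn_sq] using h2
  exact h3.symm

theorem nsgn_refl_self {t : W} (ht : cs.IsReflection t) : nsgn cs t t = -1 := by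
  obtain ⟨v, i, rfl⟩ := ht
  set s := cs.simple i with hs
  set t := v * s * v⁻¹ with hT
  have h1 : nsgn cs t t = nsgn cs (s * v⁻¹) t * nsgn cs v ((s * v⁻¹) * t * (s * v⁻¹)⁻¹) := by
    have : t = v * (s * v⁻¹) := by rw [hT, mul_assoc]
    nth_rewrite 1 [this]
    exact nsgn_mul cs v (s * v⁻¹) t
  have harg : (s * v⁻¹) * t * (s * v⁻¹)⁻¹ = s := by
    rw [hT]
    simp only [mul_inv_rev, inv_inv, CoxeterSystem.inv_simple, ← hs]
    simp only [mul_assoc, inv_mul_cancel_left, inv_mul_cancel]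
    simp
  rw [harg] at h1
  have harg2 : v⁻¹ * t * v = s := by
    rw [hT]
    simp [mul_assoc]
  have h2 : nsgn cs (s * v⁻¹) t = nsgn cs v⁻¹ t * nsgn cs s (v⁻¹ * t * v) := by
    have := nsgn_mul cs s v⁻¹ t
    rwa [inv_inv] at this
  have h3 : nsgn cs s (v⁻¹ * t * v) = -1 := by
    rw [harg2, hs, nsgn_simple, if_pos rfl]
  have h4 : nsgn cs v⁻¹ t = nsgn cs v s := by
    rw [nsgn_inv, harg2]
  rw [h1, h2, h3, h4]
  rw [mul_assoc, mul_comm (-1 : ℤˣ) (nsgn cs v s), ← mul_assoc, nsgn_sq, one_mul]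

theorem nsgn_eq_one_or (w t : W) : nsgn cs w t = 1 ∨ nsgn cs w t = -1 :=
  Int.units_eq_one_or _

/-- The master theorem: the sign cocycle detects right inversions. -/
theorem nsgn_eq_neg_one_iff : ∀ n (w t : W), cs.length w = n → cs.IsReflection t →
    (nsgn cs w t = -1 ↔ cs.length (w * t) < cs.length w) := by
  intro n
  induction n using Nat.strong_induction_on with
  | _ n IH =>
    intro w t hn ht
    by_cases hw1 : w = 1
    · subst hw1
      rw [nsgn_one]
      simp only [cs.length_one, one_mul]
      constructor
      · intro h; exact absurd h (by decide)
      · intro h; omega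
    · obtain ⟨i, hi⟩ := cs.exists_rightDescent_of_ne_one hw1
      have hilt : cs.length (w * cs.simple i) < cs.length w := hi
      have hle : cs.length w = cs.length (w * cs.simple i) + 1 := by
        rcases cs.length_mul_simple w i with h | h <;> omega
      constructor
      · intro hneg
        by_cases hts : t = cs.simple i
        · rw [hts]; exact hi
        · set w' := w * cs.simple i with hw'
          set t' := cs.simple i * t * cs.simple i with ht'
          have ht'refl : cs.IsReflection t' := by
            have := ht.conj (cs.simple i)
            rwa [CoxeterSystem.inv_simple] at this
          have hdec : nsgn cs w t = nsgn cs (cs.simple i) t * nsgn cs w' t' := by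
            have hw2 : w = w' * cs.simple i := by
              rw [hw', mul_assoc, cs.simple_mul_simple_self, mul_one]
            nth_rewrite 1 [hw2]
            have := nsgn_mul cs w' (cs.simple i) t
            rwa [CoxeterSystem.inv_simple, ← ht'] at this
          rw [nsgn_simple, if_neg hts, one_mul] at hdec
          have hneg' : nsgn cs w' t' = -1 := by rw [← hdec]; exact hneg
          have hlt' : cs.length (w' * t') < cs.length w' :=
            (IH (cs.length w') (by omega) w' t' rfl ht'refl).mp hneg'
          have hwt : w * t = w' * t' * cs.simple i := by
            rw [hw', ht']
            simp only [mul_assoc, cs.simple_mul_simple_cancel_left]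
            rw [cs.simple_mul_simple_self, mul_one]
          have : cs.length (w * t) ≤ cs.length (w' * t') + 1 := by
            rw [hwt]
            have := cs.length_mul_le (w' * t') (cs.simple i)
            rwa [cs.length_simple] at this
          omega
      · intro hlt
        set v := w * t with hv
        have hvt : v * t = w := by
          rw [hv, mul_assoc, ht.mul_self, mul_one]
        have hone : nsgn cs v t = 1 := by
          rcases nsgn_eq_one_or cs v t with h | h
          · exact h
          · have := (IH (cs.length v) (by omega) v t rfl ht).mp h
            rw [hvt] at this
            omega
        have hdec : nsgn cs w t = nsgn cs t t * nsgn cs v (t * t * t⁻¹) := by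
          nth_rewrite 1 [← hvt]
          exact nsgn_mul cs v t t
        rw [ht.mul_self, one_mul, nsgn_refl_self cs ht] at hdec
        rw [hdec]
        have harg : t⁻¹ = t := ht.inv
        rw [harg, hone, mul_one]

/-- Left inversions via the sign cocycle. -/
theorem isLeftInversion_iff_nsgn {t : W} (ht : cs.IsReflection t) (w : W) :
    cs.length (t * w) < cs.length w ↔ nsgn cs w⁻¹ t = -1 := by
  rw [nsgn_eq_neg_one_iff cs (cs.length w⁻¹) w⁻¹ t rfl ht]
  have h1 : cs.length (w⁻¹ * t) = cs.length (t * w) := by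
    rw [← cs.length_inv (w⁻¹ * t)]
    congr 1
    rw [mul_inv_rev, inv_inv, ht.inv]
  rw [h1, cs.length_inv]

end Cocycle



/-- The set `S` of simple reflections of the Coxeter system. -/
def simpleSet (cs : CoxeterSystem M W) : Set W := Set.range cs.simple

/-- `T(w)`: the set of left inversions of `w`, i.e. reflections `t` with `ℓ(tw) < ℓ(w)`. -/
def invSet (cs : CoxeterSystem M W) (w : W) : Set W :=
  {t | cs.IsReflection t ∧ cs.length (t * w) < cs.length w}

/-- `D(w) = T(w) ∩ S`. -/
def descSet (cs : CoxeterSystem M W) (w : W) : Set W :=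
  invSet cs w ∩ simpleSet cs

/-- The standard parabolic subgroup `W_Σ` generated by `Σ`. -/
def par (Sg : Set W) : Subgroup W := Subgroup.closure Sg

/-- `T_Σ`: the set of reflections of the Coxeter system `(W_Σ, Σ)`. -/
def parRefl (Sg : Set W) : Set W :=
  {t | ∃ u ∈ par Sg, ∃ s ∈ Sg, t = u * s * u⁻¹}

/-- `W^Σ = {w : T(w⁻¹) ∩ T_Σ = ∅}`, minimal-length representatives of `W/W_Σ`. -/
def minRight (cs : CoxeterSystem M W) (Sg : Set W) : Set W :=
  {w | invSet cs w⁻¹ ∩ parRefl Sg = ∅}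

/-- `^ΣW = {w : T(w) ∩ T_Σ = ∅}`, minimal-length representatives of `W_Σ\W`. -/
def minLeft (cs : CoxeterSystem M W) (Sg : Set W) : Set W :=
  {w | invSet cs w ∩ parRefl Sg = ∅}

/-- `N(Σ, Σ') = {y ∈ W^Σ ∩ ^{Σ'}W : y W_Σ y⁻¹ = W_{Σ'}}`. -/
def relN (cs : CoxeterSystem M W) (Sg Sg' : Set W) : Set W :=
  {y | y ∈ minRight cs Sg ∧ y ∈ minLeft cs Sg' ∧
    (fun u => y * u * y⁻¹) '' (par Sg : Set W) = (par Sg' : Set W)}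

/-- `w` is a longest element of `W_Σ`. -/
def IsLongest (cs : CoxeterSystem M W) (Sg : Set W) (w : W) : Prop :=
  w ∈ par Sg ∧ ∀ u ∈ par Sg, cs.length u ≤ cs.length w

/-- The longest element `w₀^Σ` of `W_Σ` (defined when it exists; junk value `1` otherwise). -/
noncomputable def longest (cs : CoxeterSystem M W) (Sg : Set W) : W :=
  letI := Classical.propDecidable (∃ w, IsLongest cs Sg w)
  if h : ∃ w, IsLongest cs Sg w then h.choose else 1

/-- `W̃ = {w : w W_Σ w⁻¹ = W_Σ and T(w) ∩ T_Σ = ∅}`. -/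
def relW (cs : CoxeterSystem M W) (Sg : Set W) : Set W :=
  {w | (fun u => w * u * w⁻¹) '' (par Sg : Set W) = (par Sg : Set W) ∧
    invSet cs w ∩ parRefl Sg = ∅}

/-- `Σ^∁ = {s ∈ S ∖ Σ : W_{Σ∪{s}} is finite}`. -/
def complSet (cs : CoxeterSystem M W) (Sg : Set W) : Set W :=
  {s ∈ simpleSet cs \ Sg | ((par (Sg ∪ {s}) : Set W)).Finite}

/-- `s̃ = w₀^{Σ∪{s}} w₀^Σ`. -/
noncomputable def tilde (cs : CoxeterSystem M W) (Sg : Set W) (s : W) : W :=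
  longest cs (Sg ∪ {s}) * longest cs Sg

/-- `S̃ = {s̃ : s ∈ Σ^∁}`. -/
noncomputable def relS (cs : CoxeterSystem M W) (Sg : Set W) : Set W :=
  {w | ∃ s ∈ complSet cs Sg, w = tilde cs Sg s}

/-- `ℓ̃(w) ∈ ℕ ∪ {∞}`: the minimal `q` such that `w = w₁ ⋯ w_q` with all `w_i ∈ S̃`. -/
noncomputable def relLength (cs : CoxeterSystem M W) (Sg : Set W) (w : W) : ℕ∞ :=
  sInf {q : ℕ∞ | ∃ l : List W, (∀ x ∈ l, x ∈ relS cs Sg) ∧ l.prod = w ∧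
    (l.length : ℕ∞) = q}

/-- The standing hypotheses on `Σ`: `Σ ⊆ S`, `W_Σ` is finite, and for every `Σ'` with
`Σ ⊆ Σ' ⊆ S` and `W_{Σ'}` finite, the longest element `w₀^{Σ'}` normalises `W_Σ`. -/
def GoodSubset (cs : CoxeterSystem M W) (Sg : Set W) : Prop :=
  Sg ⊆ simpleSet cs ∧ ((par Sg : Set W)).Finite ∧
  ∀ Sg' : Set W, Sg ⊆ Sg' → Sg' ⊆ simpleSet cs → ((par Sg' : Set W)).Finite →
    ∀ w0 : W, IsLongest cs Sg' w0 →
      (fun u => w0 * u * w0⁻¹) '' (par Sg : Set W) = (par Sg : Set W)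

section Parabolic

variable (cs : CoxeterSystem M W) (Sg : Set W)

theorem parRefl_subset_par : parRefl Sg ⊆ (par Sg : Set W) := by
  rintro t ⟨u, hu, s, hs, rfl⟩
  exact mul_mem (mul_mem hu (Subgroup.subset_closure hs)) (inv_mem hu)

theorem sg_subset_parRefl : Sg ⊆ parRefl Sg := by
  intro s hs
  exact ⟨1, one_mem _, s, hs, by simp⟩

theorem parRefl_conj {u t : W} (hu : u ∈ par Sg) (ht : t ∈ parRefl Sg) :
    u * t * u⁻¹ ∈ parRefl Sg := by
  obtain ⟨v, hv, s, hs, rfl⟩ := ht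
  refine ⟨u * v, mul_mem hu hv, s, hs, ?_⟩
  simp only [mul_inv_rev, mul_assoc]

variable {cs Sg} (hS : Sg ⊆ simpleSet cs)

include hS

theorem isReflection_of_mem_sg {s : W} (hs : s ∈ Sg) : cs.IsReflection s := by
  obtain ⟨i, rfl⟩ := hS hs
  exact cs.isReflection_simple i

theorem isReflection_of_mem_parRefl {t : W} (ht : t ∈ parRefl Sg) : cs.IsReflection t := by
  obtain ⟨v, hv, s, hs, rfl⟩ := ht
  exact (isReflection_of_mem_sg hS hs).conj v

theorem exists_list_of_mem_par {v : W} (hv : v ∈ par Sg) :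
    ∃ l : List W, (∀ x ∈ l, x ∈ Sg) ∧ l.prod = v := by
  induction hv using Subgroup.closure_induction with
  | mem x hx => exact ⟨[x], by simpa using hx, by simp⟩
  | one => exact ⟨[], by simp, by simp⟩
  | mul x y hx hy ihx ihy =>
    obtain ⟨l, hl, rfl⟩ := ihx
    obtain ⟨l', hl', rfl⟩ := ihy
    exact ⟨l ++ l', by
      intro z hz
      rcases List.mem_append.mp hz with h | h
      exacts [hl z h, hl' z h], by simp⟩
  | inv x hx ihx =>
    obtain ⟨l, hl, rfl⟩ := ihx
    refine ⟨l.reverse, by simpa using hl, ?_⟩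
    rw [List.prod_reverse_noncomm]
    have : l.map (fun z => z⁻¹) = l := by
      conv_rhs => rw [← List.map_id l]
      apply List.map_congr_left
      intro z hz
      exact (isReflection_of_mem_sg hS (hl z hz)).inv
    rw [this]

/-- Every left inversion of an element of `W_Σ` lies in `T_Σ`. -/
theorem inv_mem_parRefl {v t : W} (hv : v ∈ par Sg) (ht : cs.IsReflection t)
    (hlt : cs.length (t * v) < cs.length v) : t ∈ parRefl Sg := by
  obtain ⟨l, hl, rfl⟩ := exists_list_of_mem_par hS hv
  rw [isLeftInversion_iff_nsgn cs ht] at hlt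
  clear hv
  induction l generalizing t with
  | nil =>
    rw [List.prod_nil] at hlt
    simp [nsgn_one] at hlt
  | cons s l ih =>
    have hsSg : s ∈ Sg := hl s (by simp)
    obtain ⟨i, hi⟩ := hS hsSg
    by_cases hts : t = s
    · exact hts ▸ sg_subset_parRefl Sg hsSg
    · rw [List.prod_cons] at hlt
      have hsinv : (s * l.prod)⁻¹ = l.prod⁻¹ * s := by
        rw [mul_inv_rev, (isReflection_of_mem_sg hS hsSg).inv]
      rw [hsinv, nsgn_mul] at hlt
      have hns : nsgn cs s t = 1 := by
        rw [← hi, nsgn_simple, if_neg (by rw [hi]; exact hts)]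
      rw [hns, one_mul] at hlt
      have hsts : s * t * s⁻¹ = s * t * s := by
        rw [(isReflection_of_mem_sg hS hsSg).inv]
      rw [hsts] at hlt
      have hrefl : cs.IsReflection (s * t * s) := by
        have := ht.conj s
        rwa [(isReflection_of_mem_sg hS hsSg).inv] at this
      have := ih hrefl (fun x hx => hl x (by simp [hx])) hlt
      have h2 := parRefl_conj Sg (Subgroup.subset_closure hsSg) this
      have : s * (s * t * s) * s⁻¹ = t := by
        rw [(isReflection_of_mem_sg hS hsSg).inv]
        simp only [← mul_assoc]
        rw [(isReflection_of_mem_sg hS hsSg).mul_self, one_mul, mul_assoc,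
          (isReflection_of_mem_sg hS hsSg).mul_self, mul_one]
      rwa [this] at h2

/-- Lemma B: lengths add across `W_Σ · (minimal coset representatives)`. -/
theorem length_par_mul : ∀ n (v y : W), cs.length v = n → v ∈ par Sg → y ∈ minLeft cs Sg →
    cs.length (v * y) = cs.length v + cs.length y := by
  intro n
  induction n using Nat.strong_induction_on with
  | _ n IH =>
    intro v y hn hv hy
    by_cases hv1 : v = 1
    · subst hv1; simp
    · obtain ⟨i, hi⟩ := cs.exists_leftDescent_of_ne_one hv1
      have hilt : cs.length (cs.simple i * v) < cs.length v := hi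
      have hsparR : cs.simple i ∈ parRefl Sg :=
        inv_mem_parRefl hS hv (cs.isReflection_simple i) hilt
      have hspar : cs.simple i ∈ par Sg := parRefl_subset_par Sg hsparR
      set v' := cs.simple i * v with hv'
      have hvv : v = cs.simple i * v' := by
        rw [hv', cs.simple_mul_simple_cancel_left]
      have hv'par : v' ∈ par Sg := mul_mem hspar hv
      have hlen : cs.length v = cs.length v' + 1 := by
        rcases cs.length_simple_mul v i with h | h <;> rw [← hv'] at h <;> omega
      have ihy : cs.length (v' * y) = cs.length v' + cs.length y :=
        IH (cs.length v') (by omega) v' y rfl hv'par hy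
      have hnotlt : ¬ cs.length (cs.simple i * (v' * y)) < cs.length (v' * y) := by
        intro hcon
        rw [isLeftInversion_iff_nsgn cs (cs.isReflection_simple i)] at hcon
        have hsplit : (v' * y)⁻¹ = y⁻¹ * v'⁻¹ := by rw [mul_inv_rev]
        rw [hsplit, nsgn_mul] at hcon
        have h1 : nsgn cs v'⁻¹ (cs.simple i) = 1 := by
          rcases nsgn_eq_one_or cs v'⁻¹ (cs.simple i) with h | h
          · exact h
          · exfalso
            have := (isLeftInversion_iff_nsgn cs (cs.isReflection_simple i) v').mpr h
            rw [← hvv] at this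
            omega
        rw [h1, one_mul, inv_inv] at hcon
        have hrefl : cs.IsReflection (v'⁻¹ * cs.simple i * v') := by
          have := (cs.isReflection_simple i).conj v'⁻¹
          rwa [inv_inv] at this
        have hltY : cs.length ((v'⁻¹ * cs.simple i * v') * y) < cs.length y :=
          (isLeftInversion_iff_nsgn cs hrefl y).mpr hcon
        have hmem : v'⁻¹ * cs.simple i * v' ∈ parRefl Sg := by
          have := parRefl_conj Sg (inv_mem hv'par) hsparR
          rwa [inv_inv] at this
        have : v'⁻¹ * cs.simple i * v' ∈ invSet cs y ∩ parRefl Sg := ⟨⟨hrefl, hltY⟩, hmem⟩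
        rw [hy] at this
        exact this
      have hvy : v * y = cs.simple i * (v' * y) := by
        rw [hvv, mul_assoc]
      have : cs.length (cs.simple i * (v' * y)) = cs.length (v' * y) + 1 := by
        rcases cs.length_simple_mul (v' * y) i with h | h
        · exact h
        · exfalso
          by_cases h0 : cs.length (v' * y) = 0
          · rw [cs.length_eq_zero_iff] at h0
            rw [h0, mul_one, cs.length_simple, cs.length_one] at h
            omega
          · omega
      rw [hvy, this, ihy, hlen]
      omega

theorem length_par_mul' {v y : W} (hv : v ∈ par Sg) (hy : y ∈ minLeft cs Sg) :
    cs.length (v * y) = cs.length v + cs.length y :=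
  length_par_mul hS (cs.length v) v y rfl hv hy

theorem mem_normalizer_of_mem_relW {w : W} (hw : w ∈ relW cs Sg) :
    w ∈ Subgroup.normalizer (par Sg : Set W) := by
  rw [Subgroup.mem_normalizer_iff]
  intro h
  constructor
  · intro hh
    rw [← SetLike.mem_coe, ← hw.1]
    exact ⟨h, hh, rfl⟩
  · intro hh
    rw [← SetLike.mem_coe, ← hw.1] at hh
    obtain ⟨h', hh', heq⟩ := hh
    simp only at heq
    have : h' = h := by
      have := mul_right_cancel heq
      exact mul_left_cancel this
    rwa [← this]

theorem mem_relW_of_normalizer {y : W} (h1 : y ∈ Subgroup.normalizer (par Sg : Set W))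
    (h2 : y ∈ minLeft cs Sg) : y ∈ relW cs Sg := by
  refine ⟨?_, h2⟩
  ext h
  constructor
  · rintro ⟨u, hu, rfl⟩
    exact ((Subgroup.mem_normalizer_iff.mp h1) u).mp hu
  · intro hh
    refine ⟨y⁻¹ * h * y, ?_, by simp [mul_assoc]⟩
    have := ((Subgroup.mem_normalizer_iff.mp (inv_mem h1)) h).mp hh
    rwa [inv_inv] at this

theorem length_lt_mul_refl {w : W} (hw : w ∈ relW cs Sg) {t : W} (ht : t ∈ parRefl Sg) :
    cs.length w < cs.length (w * t) := by
  have hN := mem_normalizer_of_mem_relW hS hw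
  have htpar : t ∈ par Sg := parRefl_subset_par Sg ht
  have ht' : w * t * w⁻¹ ∈ par Sg := ((Subgroup.mem_normalizer_iff.mp hN) t).mp htpar
  have hwt : w * t = (w * t * w⁻¹) * w := by simp [mul_assoc]
  have hlen : cs.length ((w * t * w⁻¹) * w) = cs.length (w * t * w⁻¹) + cs.length w :=
    length_par_mul' hS ht' hw.2
  have htne : t ≠ 1 := by
    intro h
    have := (isReflection_of_mem_parRefl hS ht).odd_length
    rw [h, cs.length_one] at this
    simpa using this
  have hne : w * t * w⁻¹ ≠ 1 := by
    intro h
    apply htne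
    have := congrArg (fun z => w⁻¹ * z * w) h
    simpa [mul_assoc] using this
  have hge : 1 ≤ cs.length (w * t * w⁻¹) := by
    rcases Nat.eq_zero_or_pos (cs.length (w * t * w⁻¹)) with h | h
    · exact absurd (cs.length_eq_zero_iff.mp h) hne
    · exact h
  rw [hwt, hlen]
  omega

theorem inv_mem_relW {w : W} (hw : w ∈ relW cs Sg) : w⁻¹ ∈ relW cs Sg := by
  apply mem_relW_of_normalizer hS
  · exact inv_mem (mem_normalizer_of_mem_relW hS hw)
  · show invSet cs w⁻¹ ∩ parRefl Sg = ∅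
    rw [Set.eq_empty_iff_forall_notMem]
    rintro t ⟨⟨htr, hlt⟩, htp⟩
    have h1 : cs.length (t * w⁻¹) = cs.length (w * t) := by
      rw [← cs.length_inv (t * w⁻¹), mul_inv_rev, inv_inv, htr.inv]
    rw [h1, cs.length_inv] at hlt
    exact absurd hlt (not_lt.mpr (le_of_lt (length_lt_mul_refl hS hw htp)))

theorem conj_simple_mem_parRefl {w : W} (hw : w ∈ relW cs Sg) {t : W} (htS : t ∈ Sg) :
    w⁻¹ * t * w ∈ parRefl Sg := by
  have hN := mem_normalizer_of_mem_relW hS hw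
  have htpar : t ∈ par Sg := Subgroup.subset_closure htS
  have hc : w⁻¹ * t * w ∈ par Sg := by
    have := ((Subgroup.mem_normalizer_iff.mp (inv_mem hN)) t).mp htpar
    rwa [inv_inv] at this
  obtain ⟨i, hi⟩ := hS htS
  have hlt : cs.length t = 1 := by rw [← hi, cs.length_simple]
  have h1 : cs.length (t * w) = 1 + cs.length w := by
    rw [length_par_mul' hS htpar hw.2, hlt]
  have h2 : cs.length (w * (w⁻¹ * t * w)) = cs.length (w⁻¹ * t * w) + cs.length w := by
    calc cs.length (w * (w⁻¹ * t * w)) = cs.length ((w * (w⁻¹ * t * w))⁻¹) :=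
          (cs.length_inv _).symm
      _ = cs.length ((w⁻¹ * t * w)⁻¹ * w⁻¹) := by rw [mul_inv_rev]
      _ = cs.length (w⁻¹ * t * w)⁻¹ + cs.length w⁻¹ :=
          length_par_mul' hS (inv_mem hc) (inv_mem_relW hS hw).2
      _ = cs.length (w⁻¹ * t * w) + cs.length w := by rw [cs.length_inv, cs.length_inv]
  have h3 : w * (w⁻¹ * t * w) = t * w := by simp [mul_assoc]
  rw [h3, h1] at h2
  have hlc : cs.length (w⁻¹ * t * w) = 1 := by omega
  have hrefl : cs.IsReflection (w⁻¹ * t * w) := by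
    obtain ⟨j, hj⟩ := cs.length_eq_one_iff.mp hlc
    rw [hj]
    exact cs.isReflection_simple j
  apply inv_mem_parRefl hS hc hrefl
  rw [hrefl.mul_self, cs.length_one, hlc]
  omega

theorem conj_mem_parRefl {w : W} (hw : w ∈ relW cs Sg) {t : W} (ht : t ∈ parRefl Sg) :
    w⁻¹ * t * w ∈ parRefl Sg := by
  have hN := mem_normalizer_of_mem_relW hS hw
  obtain ⟨u, hu, x, hx, rfl⟩ := ht
  have hu' : w⁻¹ * u * w ∈ par Sg := by
    have := ((Subgroup.mem_normalizer_iff.mp (inv_mem hN)) u).mp hu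
    rwa [inv_inv] at this
  have key : w⁻¹ * (u * x * u⁻¹) * w
      = (w⁻¹ * u * w) * (w⁻¹ * x * w) * (w⁻¹ * u * w)⁻¹ := by
    simp only [mul_inv_rev, inv_inv, mul_assoc, mul_inv_cancel_left]
  rw [key]
  exact parRefl_conj Sg hu' (conj_simple_mem_parRefl hS hw hx)

theorem one_mem_relW : (1 : W) ∈ relW cs Sg := by
  constructor
  · ext h
    simp
  · rw [Set.eq_empty_iff_forall_notMem]
    rintro t ⟨⟨htr, hlt⟩, htp⟩
    simp [cs.length_one] at hlt

theorem mul_mem_relW {w w' : W} (hw : w ∈ relW cs Sg) (hw' : w' ∈ relW cs Sg) :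
    w * w' ∈ relW cs Sg := by
  apply mem_relW_of_normalizer hS
  · exact mul_mem (mem_normalizer_of_mem_relW hS hw) (mem_normalizer_of_mem_relW hS hw')
  · show invSet cs (w * w') ∩ parRefl Sg = ∅
    rw [Set.eq_empty_iff_forall_notMem]
    rintro t ⟨⟨htr, hlt⟩, htp⟩
    rw [isLeftInversion_iff_nsgn cs htr] at hlt
    rw [mul_inv_rev, nsgn_mul] at hlt
    have h1 : nsgn cs w⁻¹ t = 1 := by
      rcases nsgn_eq_one_or cs w⁻¹ t with h | h
      · exact h
      · exfalso
        have hl := (isLeftInversion_iff_nsgn cs htr w).mpr h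
        have : t ∈ invSet cs w ∩ parRefl Sg := ⟨⟨htr, hl⟩, htp⟩
        rw [hw.2] at this
        exact this
    rw [h1, one_mul, inv_inv] at hlt
    have hconj : w⁻¹ * t * w ∈ parRefl Sg := conj_mem_parRefl hS hw htp
    have hrefl : cs.IsReflection (w⁻¹ * t * w) := isReflection_of_mem_parRefl hS hconj
    have hl := (isLeftInversion_iff_nsgn cs hrefl w').mpr hlt
    have : w⁻¹ * t * w ∈ invSet cs w' ∩ parRefl Sg := ⟨⟨hrefl, hl⟩, hconj⟩
    rw [hw'.2] at this
    exact this

theorem relW_inter_par : relW cs Sg ∩ (par Sg : Set W) = {1} := by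
  ext v
  constructor
  · rintro ⟨hvW, hvP⟩
    by_contra hne
    have hv1 : v ≠ 1 := hne
    obtain ⟨i, hi⟩ := cs.exists_leftDescent_of_ne_one hv1
    have hilt : cs.length (cs.simple i * v) < cs.length v := hi
    have hsparR : cs.simple i ∈ parRefl Sg :=
      inv_mem_parRefl hS hvP (cs.isReflection_simple i) hilt
    have : cs.simple i ∈ invSet cs v ∩ parRefl Sg :=
      ⟨⟨cs.isReflection_simple i, hilt⟩, hsparR⟩
    rw [hvW.2] at this
    exact this
  · rintro rfl
    exact ⟨one_mem_relW hS, one_mem _⟩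

theorem exists_decomp : ∀ n (x : W), cs.length x = n →
    ∃ u ∈ par Sg, ∃ y ∈ minLeft cs Sg, x = u * y := by
  intro n
  induction n using Nat.strong_induction_on with
  | _ n IH =>
    intro x hn
    by_cases hx : invSet cs x ∩ parRefl Sg = ∅
    · exact ⟨1, one_mem _, x, hx, (one_mul x).symm⟩
    · obtain ⟨t, ht⟩ := Set.nonempty_iff_ne_empty.mpr hx
      obtain ⟨⟨htr, hlt⟩, htp⟩ := ht
      obtain ⟨u, hu, y, hy, heq⟩ := IH (cs.length (t * x)) (by omega) (t * x) rfl
      refine ⟨t * u, mul_mem (parRefl_subset_par Sg htp) hu, y, hy, ?_⟩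
      rw [mul_assoc, ← heq, ← mul_assoc, htr.mul_self, one_mul]

end Parabolic

variable (cs : CoxeterSystem M W)

/-- `W̃` is a subgroup of `N_W(W_Σ)`, `W̃ ∩ W_Σ = {1}`, and multiplication
`W̃ × W_Σ → N_W(W_Σ)` is a bijection, so `N_W(W_Σ) = W̃ ⋉ W_Σ`. -/
theorem relW_semidirect (Sg : Set W) (hSg : GoodSubset cs Sg) :
    ∃ H : Subgroup W, (H : Set W) = relW cs Sg ∧ H ≤ Subgroup.normalizer (par Sg : Set W) ∧
      relW cs Sg ∩ (par Sg : Set W) = {1} ∧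
      Set.BijOn (fun p : W × W => p.1 * p.2) (relW cs Sg ×ˢ (par Sg : Set W))
        (Subgroup.normalizer (par Sg : Set W) : Set W) := by

  obtain ⟨hS, -, -⟩ := hSg
  refine ⟨{ carrier := relW cs Sg,
            mul_mem' := fun ha hb => mul_mem_relW hS ha hb,
            one_mem' := one_mem_relW hS,
            inv_mem' := fun ha => inv_mem_relW hS ha }, rfl, ?_, relW_inter_par hS, ?_, ?_, ?_⟩
  · intro w hw
    exact mem_normalizer_of_mem_relW hS hw
  · -- MapsTo
    rintro ⟨w, u⟩ ⟨hw, hu⟩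
    have hu' : u ∈ Subgroup.normalizer (par Sg : Set W) := Subgroup.le_normalizer (SetLike.mem_coe.mp hu)
    exact mul_mem (mem_normalizer_of_mem_relW hS hw) hu'
  · -- InjOn
    rintro ⟨w, u⟩ ⟨hw, hu⟩ ⟨w', u'⟩ ⟨hw', hu'⟩ heq
    simp only at heq
    have h1 : w'⁻¹ * w = u' * u⁻¹ := by
      have := congrArg (fun z => w'⁻¹ * z * u⁻¹) heq
      simpa [mul_assoc] using this
    have h2 : w'⁻¹ * w ∈ relW cs Sg := mul_mem_relW hS (inv_mem_relW hS hw') hw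
    have h3 : w'⁻¹ * w ∈ (par Sg : Set W) := by
      rw [h1]
      exact SetLike.mem_coe.mpr (mul_mem (SetLike.mem_coe.mp hu') (inv_mem (SetLike.mem_coe.mp hu)))
    have h4 : w'⁻¹ * w ∈ relW cs Sg ∩ (par Sg : Set W) := ⟨h2, h3⟩
    rw [relW_inter_par hS] at h4
    have hww : w = w' := by
      have : w'⁻¹ * w = 1 := h4
      rw [inv_mul_eq_one] at this
      exact this.symm
    subst hww
    have huu : u = u' := by
      rw [h1] at h4
      have : u' * u⁻¹ = 1 := h4
      rw [mul_inv_eq_one] at this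
      exact this.symm
    rw [huu]
  · -- SurjOn
    intro x hx
    obtain ⟨u, hu, y, hy, rfl⟩ := exists_decomp hS (cs.length x) x rfl
    have hupar : u ∈ Subgroup.normalizer (par Sg : Set W) := Subgroup.le_normalizer hu
    have hyN : y ∈ Subgroup.normalizer (par Sg : Set W) := by
      have : y = u⁻¹ * (u * y) := by rw [← mul_assoc, inv_mul_cancel, one_mul]
      rw [this]
      exact mul_mem (inv_mem hupar) hx
    have hyW : y ∈ relW cs Sg := mem_relW_of_normalizer hS hyN hy
    have hcu : y⁻¹ * u * y ∈ (par Sg : Set W) := by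
      have := ((Subgroup.mem_normalizer_iff.mp (inv_mem hyN)) u).mp hu
      rwa [inv_inv] at this
    refine ⟨(y, y⁻¹ * u * y), ⟨hyW, hcu⟩, ?_⟩
    simp only
    rw [← mul_assoc, ← mul_assoc, mul_inv_cancel, one_mul]

end RelativeCoxeter
end

section
/- For every w ∈ W̃ and every s̃ ∈ S̃, exactly one of the following two equalities holds: ℓ(s̃ w) = ℓ(w) + ℓ(s̃) or ℓ(s̃ w) = ℓ(w) − ℓ(s̃). -/
/-!
Relative Coxeter groups: common definitions.

`(W, S)` is a Coxeter system (Mathlib's `CoxeterSystem M W`), `ℓ = cs.length`.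
For `w : W`, `invSet cs w` is the set `T(w)` of left inversions of `w`, and
`descSet cs w = T(w) ∩ S` is `D(w)`.  For a subset `Sg ⊆ S` (playing the role of `Σ`),
`par Sg` is the standard parabolic subgroup `W_Σ`, `parRefl Sg` its set of
reflections `T_Σ`, `minRight cs Sg = W^Σ`, `minLeft cs Sg = ^ΣW`,
`relN cs Sg Sg' = N(Σ, Σ')`, `IsLongest cs Sg w` says `w` is a longest element of `W_Σ`,
`longest cs Sg` is the longest element `w₀^Σ`, `relW cs Sg = W̃`,
`complSet cs Sg = Σ^∁`, `tilde cs Sg s = s̃ = w₀^{Σ∪{s}} w₀^Σ`, `relS cs Sg = S̃`,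
`relLength cs Sg = ℓ̃ : W → ℕ∞`, and `GoodSubset cs Sg` records the standing
hypotheses (1) and (2) on `Σ`.
-/

namespace RelativeCoxeter

variable {B W : Type*} [Group W] {M : CoxeterMatrix B}

attribute [local instance] Classical.propDecidable

noncomputable section

variable {B W : Type*} [Group W] {M : CoxeterMatrix B}

/-- The parity group. -/
@[ext]
structure PG (W : Type*) [Group W] where
  f : W → ZMod 2
  w : W

namespace PG

instance : Mul (PG W) := ⟨fun a b => ⟨a.f + fun t => b.f (a.w⁻¹ * t * a.w), a.w * b.w⟩⟩
instance : One (PG W) := ⟨⟨0, 1⟩⟩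
instance : Inv (PG W) := ⟨fun a => ⟨fun t => a.f (a.w * t * a.w⁻¹), a.w⁻¹⟩⟩

@[simp] theorem mul_f (a b : PG W) (t : W) : (a * b).f t = a.f t + b.f (a.w⁻¹ * t * a.w) := rfl
@[simp] theorem mul_w (a b : PG W) : (a * b).w = a.w * b.w := rfl
@[simp] theorem one_f (t : W) : (1 : PG W).f t = 0 := rfl
@[simp] theorem one_w : (1 : PG W).w = 1 := rfl
@[simp] theorem inv_f (a : PG W) (t : W) : (a⁻¹).f t = a.f (a.w * t * a.w⁻¹) := rfl
@[simp] theorem inv_w (a : PG W) : (a⁻¹).w = a.w⁻¹ := rfl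

instance : Group (PG W) where
  mul_assoc a b c := by
    ext t
    · simp only [mul_f, mul_w]
      rw [add_assoc]
      congr 2
      group
    · simp [mul_assoc]
  one_mul a := by
    ext t <;> simp
  mul_one a := by
    ext t <;> simp
  inv_mul_cancel a := by
    ext t
    · simp only [mul_f, inv_f, inv_w, one_f, inv_inv]
      exact CharTwo.add_self_eq_zero _
    · simp

end PG


theorem conj_pow_simple (cs : CoxeterSystem M W) (i j : B) (k : ℕ) :
    (cs.simple i * cs.simple j) ^ k * cs.simple i * (cs.simple i * cs.simple j) ^ k
      = cs.simple i := by
  set p := cs.simple i * cs.simple j with hp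
  induction k with
  | zero => simp
  | succ k ih =>
    have base : p * cs.simple i * p = cs.simple i := by
      rw [hp]
      simp [mul_assoc]
    calc p ^ (k+1) * cs.simple i * p ^ (k+1)
        = p ^ k * (p * cs.simple i * p) * p ^ k := by
          rw [pow_succ]
          group
      _ = p ^ k * cs.simple i * p ^ k := by rw [base]
      _ = cs.simple i := ih

theorem sum_period_zero (m : ℕ) (h : ℕ → ZMod 2) (hper : ∀ e, h (e + m) = h e) :
    ∑ e ∈ Finset.range (2 * m), h e = 0 := by
  rw [two_mul, Finset.sum_range_add, ← Finset.sum_add_distrib]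
  apply Finset.sum_eq_zero
  intro e _
  rw [Nat.add_comm m e, hper e, CharTwo.add_self_eq_zero]

/-- The generator of the parity group associated to a simple reflection. -/
def pgen (cs : CoxeterSystem M W) (i : B) : PG W :=
  ⟨fun t => if t = cs.simple i then 1 else 0, cs.simple i⟩

theorem pg_pow_w (a : PG W) (n : ℕ) : (a ^ n).w = a.w ^ n := by
  induction n with
  | zero => rw [pow_zero, pow_zero, PG.one_w]
  | succ n ih => rw [pow_succ, pow_succ, PG.mul_w, ih]

variable (cs : CoxeterSystem M W)

theorem pgen_w (i : B) : (pgen cs i).w = cs.simple i := rfl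

theorem pgen_mul_w (i j : B) : (pgen cs i * pgen cs j).w = cs.simple i * cs.simple j := rfl

theorem pgen_mul_f (i j : B) (t : W) : (pgen cs i * pgen cs j).f t =
    (if t = cs.simple i then 1 else 0)
      + (if t = cs.simple i * cs.simple j * cs.simple i then 1 else 0) := by
  show (if t = cs.simple i then (1 : ZMod 2) else 0)
      + (if (pgen cs i).w⁻¹ * t * (pgen cs i).w = cs.simple j then 1 else 0) = _
  congr 1
  rw [pgen_w, cs.inv_simple]
  apply if_congr _ rfl rfl
  constructor
  · intro h
    have := congrArg (fun x => cs.simple i * x * cs.simple i) h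
    rw [← this]
    group
    simp [pow_two]
  · intro h
    rw [h]
    group
    simp [pow_two, mul_assoc]

theorem pgen_mul_pow_f (i j : B) (n : ℕ) (t : W) :
    ((pgen cs i * pgen cs j) ^ n).f t =
      ∑ e ∈ Finset.range (2 * n),
        (if t = (cs.simple i * cs.simple j) ^ e * cs.simple i then 1 else 0) := by
  set p := cs.simple i * cs.simple j with hp
  induction n with
  | zero => simp [pow_zero, PG.one_f]
  | succ n ih =>
    have key : ∀ k : ℕ, p ^ k * cs.simple i * (p ^ k)⁻¹ = p ^ (2 * k) * cs.simple i := by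
      intro k
      calc p ^ k * cs.simple i * (p ^ k)⁻¹
          = p ^ k * (p ^ k * cs.simple i * p ^ k) * (p ^ k)⁻¹ := by
            rw [conj_pow_simple cs i j k]
        _ = p ^ (2 * k) * cs.simple i := by
            rw [two_mul, pow_add]
            group
    rw [pow_succ, PG.mul_f, ih, pg_pow_w, pgen_mul_w, ← hp]
    have c1 : ((p ^ n)⁻¹ * t * p ^ n = cs.simple i) ↔ (t = p ^ (2 * n) * cs.simple i) := by
      rw [← key n]
      constructor
      · intro h
        have := congrArg (fun x => p ^ n * x * (p ^ n)⁻¹) h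
        rw [← this]
        group
      · intro h
        rw [h]
        group
    have c2 : ((p ^ n)⁻¹ * t * p ^ n = cs.simple i * cs.simple j * cs.simple i)
        ↔ (t = p ^ (2 * n + 1) * cs.simple i) := by
      have hsjsi : cs.simple i * cs.simple j * cs.simple i = p * cs.simple i := by rw [hp]
      have key2 : p ^ n * (p * cs.simple i) * (p ^ n)⁻¹ = p ^ (2 * n + 1) * cs.simple i := by
        calc p ^ n * (p * cs.simple i) * (p ^ n)⁻¹
            = p ^ n * (p * (p ^ n * cs.simple i * p ^ n)) * (p ^ n)⁻¹ := by
              rw [conj_pow_simple cs i j n]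
          _ = p ^ (2 * n + 1) * cs.simple i := by
              rw [two_mul, pow_add, pow_add, pow_one]
              group
      rw [hsjsi, ← key2]
      constructor
      · intro h
        have := congrArg (fun x => p ^ n * x * (p ^ n)⁻¹) h
        rw [← this]
        group
      · intro h
        rw [h]
        group
    rw [pgen_mul_f]
    simp only [c1, c2]
    have : 2 * (n + 1) = (2 * n) + 1 + 1 := by ring
    rw [this, Finset.sum_range_succ, Finset.sum_range_succ]
    ring

theorem pgen_liftable : M.IsLiftable (fun i => pgen cs i) := by
  intro i j
  have hrel : (cs.simple i * cs.simple j) ^ M i j = 1 := cs.simple_mul_simple_pow i j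
  ext t
  · rw [pgen_mul_pow_f, PG.one_f]
    apply sum_period_zero
    intro e
    apply if_congr _ rfl rfl
    rw [pow_add, hrel, mul_one]
  · rw [pg_pow_w, pgen_mul_w, hrel, PG.one_w]

/-- The parity representation of the Coxeter group. -/
def pphi : W →* PG W := cs.lift ⟨fun i => pgen cs i, pgen_liftable cs⟩

theorem pphi_simple (i : B) : pphi cs (cs.simple i) = pgen cs i :=
  cs.lift_apply_simple (pgen_liftable cs) i

theorem pphi_w (w : W) : (pphi cs w).w = w := by
  let pr : PG W →* W := { toFun := PG.w, map_one' := rfl, map_mul' := fun a b => rfl }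
  have h : pr.comp (pphi cs) = MonoidHom.id W := by
    apply cs.ext_simple
    intro i
    show pr (pphi cs (cs.simple i)) = cs.simple i
    rw [pphi_simple]
    rfl
  exact DFunLike.congr_fun h w

/-- The parity of the number of times `t` occurs in the (left) inversion sequence of
any word for `w`. -/
def nn (w t : W) : ZMod 2 := (pphi cs w).f t

@[simp] theorem nn_one (t : W) : nn cs 1 t = 0 := by
  unfold nn
  rw [map_one, PG.one_f]

theorem nn_mul (u v t : W) : nn cs (u * v) t = nn cs u t + nn cs v (u⁻¹ * t * u) := by
  unfold nn
  rw [map_mul, PG.mul_f, pphi_w]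

theorem nn_simple (i : B) (t : W) : nn cs (cs.simple i) t = if t = cs.simple i then 1 else 0 := by
  unfold nn
  rw [pphi_simple]
  rfl


theorem nn_reflection_self {t : W} (ht : cs.IsReflection t) : nn cs t t = 1 := by
  obtain ⟨u, i, rfl⟩ := ht
  induction u using cs.simple_induction_left generalizing i with
  | one =>
    simp only [one_mul, inv_one, mul_one]
    rw [nn_simple, if_pos rfl]
  | mul_simple_left w j hw =>
    have hgoal_eq : cs.simple j * w * cs.simple i * (cs.simple j * w)⁻¹
        = cs.simple j * ((w * cs.simple i * w⁻¹) * cs.simple j) := by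
      rw [mul_inv_rev, cs.inv_simple]
      group
    rw [hgoal_eq]
    set T' := w * cs.simple i * w⁻¹ with hT'
    have harg1 : (cs.simple j)⁻¹ * (cs.simple j * (T' * cs.simple j)) * cs.simple j = T' := by
      rw [cs.inv_simple]
      simp [mul_assoc]
    have e1 : nn cs (cs.simple j * (T' * cs.simple j)) (cs.simple j * (T' * cs.simple j))
        = nn cs (cs.simple j) (cs.simple j * (T' * cs.simple j)) + nn cs (T' * cs.simple j) T' := by
      rw [nn_mul, harg1]
    have harg2 : T'⁻¹ * T' * T' = T' := by group
    have e2 : nn cs (T' * cs.simple j) T' = nn cs T' T' + nn cs (cs.simple j) T' := by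
      rw [nn_mul, harg2]
    have h3 : nn cs T' T' = 1 := hw i
    have hiff : cs.simple j * (T' * cs.simple j) = cs.simple j ↔ T' = cs.simple j := by
      constructor
      · intro h
        have : T' = cs.simple j * (cs.simple j * (T' * cs.simple j)) * cs.simple j := by
          simp [mul_assoc]
        rw [this, h]
        simp [mul_assoc]
      · intro h
        rw [h]
        simp [mul_assoc]
    rw [e1, e2, h3, nn_simple, nn_simple]
    by_cases hc : cs.simple j * (T' * cs.simple j) = cs.simple j
    · rw [if_pos hc, if_pos (hiff.mp hc)]
      decide
    · rw [if_neg hc, if_neg (fun hh => hc (hiff.mpr hh))]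
      decide

private theorem length_lt_of_nn_eq_one_aux :
    ∀ n : ℕ, ∀ t w : W, cs.IsReflection t → cs.length w ≤ n → nn cs w t = 1 →
      cs.length (t * w) < cs.length w := by
  intro n
  induction n with
  | zero =>
    intro t w ht hle h
    have hw1 : w = 1 := by
      rw [← cs.length_eq_zero_iff]
      omega
    rw [hw1, nn_one] at h
    exact absurd h (by decide)
  | succ n ih =>
    intro t w ht hle h
    rcases eq_or_ne w 1 with rfl | hw1
    · rw [nn_one] at h
      exact absurd h (by decide)
    · obtain ⟨i, hdesc⟩ := cs.exists_leftDescent_of_ne_one hw1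
      have hdesc' : cs.length (cs.simple i * w) < cs.length w := hdesc
      set v := cs.simple i * w with hv
      have hwv : w = cs.simple i * v := by rw [hv, ← mul_assoc]; simp
      have hlv : cs.length v ≤ n := by omega
      have hsplit : nn cs w t = (if t = cs.simple i then 1 else 0)
          + nn cs v (cs.simple i * t * cs.simple i) := by
        conv_lhs => rw [hwv]
        rw [nn_mul, nn_simple, cs.inv_simple]
      by_cases hc : t = cs.simple i
      · rw [hc, ← hv]
        exact hdesc'
      · rw [hsplit, if_neg hc, zero_add] at h
        have ht' : cs.IsReflection (cs.simple i * t * cs.simple i) := by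
          have := ht.conj (cs.simple i)
          rwa [cs.inv_simple] at this
        have hlt' := ih _ v ht' hlv h
        have heq : t * w = cs.simple i * (cs.simple i * t * cs.simple i * v) := by
          rw [hwv]
          group
          simp [pow_two, mul_assoc]
        have hle : cs.length (t * w) ≤ cs.length (cs.simple i * t * cs.simple i * v) + 1 := by
          rw [heq]
          calc cs.length (cs.simple i * (cs.simple i * t * cs.simple i * v))
              ≤ cs.length (cs.simple i) + cs.length (cs.simple i * t * cs.simple i * v) :=
                cs.length_mul_le _ _
            _ = cs.length (cs.simple i * t * cs.simple i * v) + 1 := by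
                rw [cs.length_simple]; ring
        have : cs.length v < cs.length w := hdesc'
        omega

theorem length_lt_of_nn_eq_one {t : W} (ht : cs.IsReflection t) (w : W)
    (h : nn cs w t = 1) : cs.length (t * w) < cs.length w :=
  length_lt_of_nn_eq_one_aux cs (cs.length w) t w ht le_rfl h

theorem nn_eq_one_of_length_lt {t : W} (ht : cs.IsReflection t) (w : W)
    (h : cs.length (t * w) < cs.length w) : nn cs w t = 1 := by
  set v := t * w with hv
  have hwv : w = t * v := by rw [hv, ← mul_assoc, ht.mul_self, one_mul]
  have hsplit : nn cs w t = nn cs t t + nn cs v t := by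
    conv_lhs => rw [hwv]
    rw [nn_mul]
    have harg : t⁻¹ * t * t = t := by
      rw [ht.inv]
      calc t * t * t = t * (t * t) := by group
        _ = t := by rw [ht.mul_self, mul_one]
    rw [harg]
  have hz : nn cs v t = 0 := by
    by_contra hnz
    have h1 : nn cs v t = 1 := by
      have : ∀ x : ZMod 2, x ≠ 0 → x = 1 := by decide
      exact this _ hnz
    have hlt := length_lt_of_nn_eq_one cs ht v h1
    have htv : t * v = w := by rw [hv, ← mul_assoc, ht.mul_self, one_mul]
    rw [htv] at hlt
    omega
  rw [hsplit, nn_reflection_self cs ht, hz, add_zero]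

/-- Master equivalence: for a reflection `t`, `nn w t = 1` iff `t` is a left inversion of `w`. -/
theorem nn_eq_one_iff {t : W} (ht : cs.IsReflection t) (w : W) :
    nn cs w t = 1 ↔ cs.length (t * w) < cs.length w :=
  ⟨length_lt_of_nn_eq_one cs ht w, nn_eq_one_of_length_lt cs ht w⟩

theorem nn_eq_zero_iff {t : W} (ht : cs.IsReflection t) (w : W) :
    nn cs w t = 0 ↔ ¬ cs.length (t * w) < cs.length w := by
  rw [← nn_eq_one_iff cs ht w]
  constructor
  · intro h0 h1
    rw [h0] at h1
    exact absurd h1 (by decide)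
  · intro h1
    have : ∀ x : ZMod 2, x ≠ 1 → x = 0 := by decide
    exact this _ (fun hh => h1 hh)


theorem nn_wordProd (ω : List B) (t : W) :
    nn cs (cs.wordProd ω) t = (List.count t (cs.leftInvSeq ω) : ZMod 2) := by
  induction ω generalizing t with
  | nil =>
    rw [cs.wordProd_nil, cs.leftInvSeq_nil, nn_one]
    simp
  | cons i ω ih =>
    rw [cs.wordProd_cons, nn_mul, nn_simple, cs.inv_simple]
    have hlis : cs.leftInvSeq (i :: ω)
        = cs.simple i :: List.map (MulAut.conj (cs.simple i)) (cs.leftInvSeq ω) := rfl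
    rw [hlis, List.count_cons]
    have hconj : t = (MulAut.conj (cs.simple i)) (cs.simple i * t * cs.simple i) := by
      simp only [MulAut.conj_apply, cs.inv_simple]
      simp [mul_assoc]
    have hcount : List.count t (List.map (⇑(MulAut.conj (cs.simple i))) (cs.leftInvSeq ω))
        = List.count (cs.simple i * t * cs.simple i) (cs.leftInvSeq ω) := by
      conv_lhs => rw [hconj]
      exact List.count_map_of_injective _ _ (MulAut.conj (cs.simple i)).injective _
    rw [hcount, ih]
    push_cast
    rw [add_comm]
    congr 1
    simp only [beq_iff_eq]
    by_cases hc : t = cs.simple i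
    · rw [if_pos hc, if_pos hc.symm]
    · rw [if_neg hc, if_neg (fun hh => hc hh.symm)]

theorem mem_leftInvSeq_of_nn_eq_one {ω : List B} {t : W} (h : nn cs (cs.wordProd ω) t = 1) :
    t ∈ cs.leftInvSeq ω := by
  rw [nn_wordProd] at h
  by_contra hmem
  rw [List.count_eq_zero_of_not_mem hmem] at h
  exact absurd h (by decide)

/-- Positional strong exchange. -/
theorem exists_eraseIdx_of_nn_eq_one {ω : List B} {t : W} (h : nn cs (cs.wordProd ω) t = 1) :
    ∃ j < ω.length, t * cs.wordProd ω = cs.wordProd (ω.eraseIdx j) := by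
  have hmem := mem_leftInvSeq_of_nn_eq_one cs h
  obtain ⟨j, hj, hget⟩ := List.getElem_of_mem hmem
  rw [cs.length_leftInvSeq] at hj
  refine ⟨j, hj, ?_⟩
  have hgetD : (cs.leftInvSeq ω).getD j 1 = t := by
    rw [List.getD_eq_getElem _ _ (by rw [cs.length_leftInvSeq]; exact hj)]
    exact hget
  rw [← hgetD]
  exact cs.getD_leftInvSeq_mul_wordProd ω j

/-- Strong exchange, length version. -/
theorem exists_eraseIdx_of_length_lt {ω : List B} {t : W} (ht : cs.IsReflection t)
    (h : cs.length (t * cs.wordProd ω) < cs.length (cs.wordProd ω)) :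
    ∃ j < ω.length, t * cs.wordProd ω = cs.wordProd (ω.eraseIdx j) :=
  exists_eraseIdx_of_nn_eq_one cs (nn_eq_one_of_length_lt cs ht _ h)

theorem invSet_eq_of_reduced {ω : List B} (hω : cs.IsReduced ω) :
    invSet cs (cs.wordProd ω) = {t | t ∈ cs.leftInvSeq ω} := by
  ext t
  constructor
  · rintro ⟨ht, hlt⟩
    exact mem_leftInvSeq_of_nn_eq_one cs (nn_eq_one_of_length_lt cs ht _ hlt)
  · intro hmem
    have ht := cs.isReflection_of_mem_leftInvSeq ω hmem
    have := cs.isLeftInversion_of_mem_leftInvSeq hω hmem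
    exact ⟨ht, this.2⟩

theorem invSet_finite (w : W) : (invSet cs w).Finite := by
  obtain ⟨ω, hω, rfl⟩ := cs.exists_reduced_word' w
  rw [invSet_eq_of_reduced cs hω]
  exact (cs.leftInvSeq ω).finite_toSet

theorem invSet_ncard (w : W) : (invSet cs w).ncard = cs.length w := by
  obtain ⟨ω, hω, rfl⟩ := cs.exists_reduced_word' w
  rw [invSet_eq_of_reduced cs hω]
  have hnd := hω.nodup_leftInvSeq
  have h1 : {t | t ∈ cs.leftInvSeq ω} = ((cs.leftInvSeq ω).toFinset : Set W) := by
    ext t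
    simp
  rw [h1, Set.ncard_coe_finset, List.toFinset_card_of_nodup hnd, cs.length_leftInvSeq]
  exact hω.symm

theorem mem_invSet_iff {t : W} (ht : cs.IsReflection t) (w : W) :
    t ∈ invSet cs w ↔ nn cs w t = 1 := by
  rw [nn_eq_one_iff cs ht]
  exact ⟨fun h => h.2, fun h => ⟨ht, h⟩⟩


/-! ### Parabolic subgroups -/

theorem wordProd_mem_par {P : Set W} {ω : List B} (hω : ∀ i ∈ ω, cs.simple i ∈ P) :
    cs.wordProd ω ∈ par P := by
  induction ω with
  | nil => rw [cs.wordProd_nil]; exact one_mem _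
  | cons i ω ih =>
    rw [cs.wordProd_cons]
    exact mul_mem (Subgroup.subset_closure (hω i (List.mem_cons_self)))
      (ih fun j hj => hω j (List.mem_cons_of_mem i hj))

theorem mem_par_iff {P : Set W} (hP : P ⊆ simpleSet cs) {x : W} :
    x ∈ par P ↔ ∃ ω : List B, (∀ i ∈ ω, cs.simple i ∈ P) ∧ cs.wordProd ω = x := by
  constructor
  · intro hx
    induction hx using Subgroup.closure_induction with
    | mem y hy =>
      obtain ⟨i, hi⟩ := hP hy
      exact ⟨[i], by simpa [hi] using hy, by simp [hi]⟩
    | one => exact ⟨[], by simp, by simp⟩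
    | mul y z _ _ hy hz =>
      obtain ⟨ω₁, h1, rfl⟩ := hy
      obtain ⟨ω₂, h2, rfl⟩ := hz
      exact ⟨ω₁ ++ ω₂, by
        intro i hi
        rcases List.mem_append.mp hi with h | h
        exacts [h1 i h, h2 i h], by rw [cs.wordProd_append]⟩
    | inv y _ hy =>
      obtain ⟨ω, h1, rfl⟩ := hy
      exact ⟨ω.reverse, fun i hi => h1 i (List.mem_reverse.mp hi), by simp⟩
  · rintro ⟨ω, hω, rfl⟩
    exact wordProd_mem_par cs hω

theorem exists_reduced_word_par {P : Set W} :
    ∀ n : ℕ, ∀ ω : List B, ω.length ≤ n → (∀ i ∈ ω, cs.simple i ∈ P) →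
    ∃ ω' : List B, (∀ i ∈ ω', cs.simple i ∈ P) ∧ cs.IsReduced ω'
      ∧ cs.wordProd ω' = cs.wordProd ω := by
  intro n
  induction n with
  | zero =>
    intro ω hlen hω
    have : ω = [] := List.length_eq_zero_iff.mp (by omega)
    exact ⟨ω, hω, by rw [this]; simp [CoxeterSystem.IsReduced], rfl⟩
  | succ n ih =>
    intro ω hlen hω
    by_cases hred : cs.IsReduced ω
    · exact ⟨ω, hω, hred, rfl⟩
    · -- find minimal k with take (k+1) not reduced
      have hex : ∃ k, ¬ cs.IsReduced (ω.take (k+1)) := by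
        refine ⟨ω.length, ?_⟩
        rwa [List.take_of_length_le (by omega)]
      set k := Nat.find hex with hkdef
      have hk : ¬ cs.IsReduced (ω.take (k+1)) := Nat.find_spec hex
      have hkred : cs.IsReduced (ω.take k) := by
        rcases Nat.eq_zero_or_pos k with h0 | hpos
        · rw [h0]
          simp [CoxeterSystem.IsReduced]
        · have := Nat.find_min hex (m := k - 1) (by omega)
          rw [not_not] at this
          have hkk : k - 1 + 1 = k := by omega
          rwa [hkk] at this
      have hklen : k < ω.length := by
        by_contra hge
        apply hred
        have heq : List.take k ω = ω := List.take_of_length_le (by omega)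
        rwa [heq] at hkred
      have htake : ω.take (k+1) = ω.take k ++ [ω.get ⟨k, hklen⟩] := by
        rw [List.take_succ]
        congr
        rw [List.getElem?_eq_getElem hklen]
        rfl
      have hlen_take : (ω.take k).length = k := by
        rw [List.length_take]
        omega
      have hlk : cs.length (cs.wordProd (ω.take k)) = k := by
        have := hkred
        unfold CoxeterSystem.IsReduced at this
        rw [this, hlen_take]
      have hprod : cs.wordProd (ω.take (k+1)) = cs.wordProd (ω.take k) * cs.simple (ω.get ⟨k, hklen⟩) := by
        rw [htake, cs.wordProd_append, cs.wordProd_singleton]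
      have hlt : cs.length (cs.wordProd (ω.take k) * cs.simple (ω.get ⟨k, hklen⟩)) < k := by
        have hne : cs.length (cs.wordProd (ω.take (k+1))) ≠ k + 1 := by
          intro hcon
          apply hk
          unfold CoxeterSystem.IsReduced
          rw [hcon, List.length_take]
          omega
        have halt := cs.length_mul_simple (cs.wordProd (ω.take k)) (ω.get ⟨k, hklen⟩)
        rw [hprod] at hne
        rcases halt with h | h
        · exact absurd (by rw [h, hlk]) hne
        · rw [hlk] at h
          omega
      set u := cs.wordProd (ω.take k) with hu
      set t := u * cs.simple (ω.get ⟨k, hklen⟩) * u⁻¹ with ht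
      have htrefl : cs.IsReflection t := ⟨u, ω.get ⟨k, hklen⟩, rfl⟩
      have htu : t * u = u * cs.simple (ω.get ⟨k, hklen⟩) := by
        rw [ht]
        group
      have hlt2 : cs.length (t * u) < cs.length u := by
        rw [htu, hlk]
        exact hlt
      obtain ⟨j, hj, hjer⟩ := exists_eraseIdx_of_length_lt cs htrefl hlt2
      -- assemble shorter word
      have homega : ω = ω.take (k+1) ++ ω.drop (k+1) := (List.take_append_drop _ _).symm
      have hπω : cs.wordProd ω = (t * u) * cs.wordProd (ω.drop (k+1)) := by
        conv_lhs => rw [homega]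
        rw [cs.wordProd_append, hprod, htu]
      set ω'' := ((ω.take k).eraseIdx j) ++ ω.drop (k+1) with hω''
      have hπω'' : cs.wordProd ω'' = cs.wordProd ω := by
        rw [hω'', cs.wordProd_append, ← hjer, hπω]
      have hsub : ∀ i ∈ ω'', cs.simple i ∈ P := by
        intro i hi
        rcases List.mem_append.mp hi with h | h
        · exact hω i (List.take_subset _ _ (List.eraseIdx_subset h))
        · exact hω i (List.drop_subset _ _ h)
      have hlen'' : ω''.length ≤ n := by
        rw [hω'', List.length_append, List.length_eraseIdx]
        rw [hlen_take] at hj ⊢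
        simp only [if_pos hj]
        rw [List.length_drop]
        omega
      obtain ⟨ω', h1, h2, h3⟩ := ih ω'' hlen'' hsub
      exact ⟨ω', h1, h2, by rw [h3, hπω'']⟩

theorem mem_par_iff_reduced {P : Set W} (hP : P ⊆ simpleSet cs) {x : W} :
    x ∈ par P ↔ ∃ ω : List B, (∀ i ∈ ω, cs.simple i ∈ P) ∧ cs.IsReduced ω
      ∧ cs.wordProd ω = x := by
  constructor
  · intro hx
    obtain ⟨ω, hω, rfl⟩ := (mem_par_iff cs hP).mp hx
    obtain ⟨ω', h1, h2, h3⟩ := exists_reduced_word_par cs ω.length ω le_rfl hω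
    exact ⟨ω', h1, h2, h3⟩
  · rintro ⟨ω, hω, _, rfl⟩
    exact wordProd_mem_par cs hω


theorem mem_of_mem_par_length_one {P : Set W} (hP : P ⊆ simpleSet cs) {x : W}
    (hx : x ∈ par P) (hlen : cs.length x = 1) : x ∈ P := by
  obtain ⟨ω, hω, hred, rfl⟩ := (mem_par_iff_reduced cs hP).mp hx
  have hl : ω.length = 1 := by
    unfold CoxeterSystem.IsReduced at hred
    omega
  obtain ⟨i, rfl⟩ := List.length_eq_one_iff.mp hl
  rw [cs.wordProd_singleton]
  exact hω i (List.mem_singleton.mpr rfl)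

theorem exists_simple_descent_of_mem_par {P : Set W} (hP : P ⊆ simpleSet cs) {x : W}
    (hx : x ∈ par P) (hne : x ≠ 1) :
    ∃ i : B, cs.simple i ∈ P ∧ cs.length (cs.simple i * x) < cs.length x := by
  obtain ⟨ω, hω, hred, rfl⟩ := (mem_par_iff_reduced cs hP).mp hx
  cases ω with
  | nil => exact absurd (cs.wordProd_nil) hne
  | cons i ω' =>
    refine ⟨i, hω i (List.mem_cons_self), ?_⟩
    rw [cs.wordProd_cons, ← mul_assoc, cs.simple_mul_simple_self, one_mul]
    have h1 : cs.length (cs.simple i * cs.wordProd ω') = ω'.length + 1 := by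
      have h := hred
      unfold CoxeterSystem.IsReduced at h
      rw [cs.wordProd_cons] at h
      rw [h]
      simp
    have h2 : cs.length (cs.wordProd ω') ≤ ω'.length := cs.length_wordProd_le ω'
    omega

theorem invSet_subset_par {P : Set W} (hP : P ⊆ simpleSet cs) {x : W} (hx : x ∈ par P) :
    invSet cs x ⊆ (par P : Set W) := by
  obtain ⟨ω, hω, hred, rfl⟩ := (mem_par_iff_reduced cs hP).mp hx
  intro t ht
  rw [invSet_eq_of_reduced cs hred] at ht
  simp only [Set.mem_setOf_eq] at ht
  clear hred hx
  induction ω generalizing t with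
  | nil => simp at ht
  | cons i ω ih =>
    have hlis : cs.leftInvSeq (i :: ω)
        = cs.simple i :: List.map (MulAut.conj (cs.simple i)) (cs.leftInvSeq ω) := rfl
    rw [hlis] at ht
    rcases List.mem_cons.mp ht with h | h
    · rw [h]
      exact Subgroup.subset_closure (hω i (List.mem_cons_self))
    · obtain ⟨t', ht', rfl⟩ := List.mem_map.mp h
      have hmem : cs.simple i ∈ par P := Subgroup.subset_closure (hω i (List.mem_cons_self))
      have := ih (fun j hj => hω j (List.mem_cons_of_mem i hj)) ht'
      simp only [MulAut.conj_apply, cs.inv_simple]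
      exact mul_mem (mul_mem hmem this) hmem

theorem mem_parRefl_of_mem_lis {P : Set W} {ω : List B} (hω : ∀ i ∈ ω, cs.simple i ∈ P)
    {t : W} (ht : t ∈ cs.leftInvSeq ω) : t ∈ parRefl P := by
  induction ω generalizing t with
  | nil => simp at ht
  | cons i ω ih =>
    have hlis : cs.leftInvSeq (i :: ω)
        = cs.simple i :: List.map (MulAut.conj (cs.simple i)) (cs.leftInvSeq ω) := rfl
    rw [hlis] at ht
    rcases List.mem_cons.mp ht with h | h
    · exact ⟨1, one_mem _, cs.simple i, hω i (List.mem_cons_self), by rw [h]; group⟩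
    · obtain ⟨t', ht', rfl⟩ := List.mem_map.mp h
      obtain ⟨u, hu, σ, hσ, rfl⟩ := ih (fun j hj => hω j (List.mem_cons_of_mem i hj)) ht'
      refine ⟨cs.simple i * u, mul_mem (Subgroup.subset_closure (hω i (List.mem_cons_self))) hu,
        σ, hσ, ?_⟩
      simp only [MulAut.conj_apply, cs.inv_simple, mul_inv_rev]
      group

/-- `parRefl P` is precisely the set of reflections lying in the parabolic subgroup. -/
theorem parRefl_eq {P : Set W} (hP : P ⊆ simpleSet cs) :
    parRefl P = {t | cs.IsReflection t ∧ t ∈ par P} := by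
  ext t
  constructor
  · rintro ⟨u, hu, σ, hσ, rfl⟩
    obtain ⟨i, hi⟩ := hP hσ
    constructor
    · rw [← hi]
      exact ⟨u, i, rfl⟩
    · exact mul_mem (mul_mem hu (Subgroup.subset_closure hσ)) (inv_mem hu)
  · rintro ⟨ht, hmem⟩
    have htne : cs.length t ≠ 0 := by
      intro h0
      have := ht.odd_length
      rw [h0] at this
      exact (Nat.not_odd_iff_even.mpr Even.zero) this
    have hinv : t ∈ invSet cs t := by
      refine ⟨ht, ?_⟩
      rw [ht.mul_self, cs.length_one]
      omega
    obtain ⟨ω, hω, hred, hprod⟩ := (mem_par_iff_reduced cs hP).mp hmem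
    rw [← hprod] at hinv
    rw [invSet_eq_of_reduced cs hred] at hinv
    simp only [Set.mem_setOf_eq] at hinv
    exact hprod ▸ mem_parRefl_of_mem_lis cs hω hinv


/-! ### Coset decompositions -/

theorem zmod2_add_eq_one {a b : ZMod 2} (h : a + b = 1) : a = 1 ∨ b = 1 := by
  have hall : ∀ a b : ZMod 2, a + b = 1 → a = 1 ∨ b = 1 := by decide
  exact hall a b h

theorem length_par_mul_s8 {P : Set W} (hP : P ⊆ simpleSet cs) {d : W}
    (hd : ∀ u ∈ par P, cs.length d ≤ cs.length (u * d)) :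
    ∀ u ∈ par P, cs.length (u * d) = cs.length u + cs.length d := by
  intro u hu
  generalize hn : cs.length u = n
  induction n using Nat.strong_induction_on generalizing u with
  | _ n ih =>
    rcases eq_or_ne u 1 with rfl | hne
    · simp [← hn]
    · obtain ⟨i, hiP, hdesc⟩ := exists_simple_descent_of_mem_par cs hP hu hne
      set u' := cs.simple i * u with hu'
      have hu'mem : u' ∈ par P := mul_mem (Subgroup.subset_closure hiP) hu
      have huu' : u = cs.simple i * u' := by rw [hu', ← mul_assoc]; simp
      have hlu' : cs.length u' = cs.length u - 1 ∧ cs.length u' < cs.length u := by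
        constructor
        · rcases cs.length_simple_mul u i with h | h
          · rw [← hu'] at h; omega
          · rw [← hu'] at h; omega
        · exact hdesc
      have hihyp := ih (cs.length u') (by omega) u' hu'mem rfl
      -- u * d = s i * (u' * d)
      have hkey : u * d = cs.simple i * (u' * d) := by rw [huu', mul_assoc]
      by_cases hcase : cs.length (cs.simple i * (u' * d)) < cs.length (u' * d)
      · exfalso
        have hnn : nn cs (u' * d) (cs.simple i) = 1 :=
          nn_eq_one_of_length_lt cs (cs.isReflection_simple i) _ hcase
        rw [nn_mul] at hnn
        rcases zmod2_add_eq_one hnn with h1 | h1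
        · have := length_lt_of_nn_eq_one cs (cs.isReflection_simple i) u' h1
          rw [← huu'] at this
          omega
        · set t₀ := u'⁻¹ * cs.simple i * u' with ht₀
          have ht₀refl : cs.IsReflection t₀ := by
            have hconj := (cs.isReflection_simple i).conj u'⁻¹
            rw [inv_inv] at hconj
            exact hconj
          have ht₀mem : t₀ ∈ par P :=
            mul_mem (mul_mem (inv_mem hu'mem) (Subgroup.subset_closure hiP)) hu'mem
          have := length_lt_of_nn_eq_one cs ht₀refl d h1
          have := hd t₀ ht₀mem
          omega
      · have hsm : cs.length (cs.simple i * (u' * d)) = cs.length (u' * d) + 1 := by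
          rcases cs.length_simple_mul (u' * d) i with h | h
          · exact h
          · omega
        rw [hkey, hsm, hihyp]
        omega

theorem exists_coset_decomp {P : Set W} (hP : P ⊆ simpleSet cs) (w : W) :
    ∃ a d : W, a ∈ par P ∧ w = a * d ∧
      (∀ u ∈ par P, cs.length d ≤ cs.length (u * d)) ∧
      cs.length w = cs.length a + cs.length d := by
  have hSne : {n : ℕ | ∃ u ∈ par P, cs.length (u * w) = n}.Nonempty :=
    ⟨cs.length w, 1, one_mem _, by rw [one_mul]⟩
  obtain ⟨u₀, hu₀, hlen₀⟩ : ∃ u ∈ par P,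
      cs.length (u * w) = sInf {n : ℕ | ∃ u ∈ par P, cs.length (u * w) = n} :=
    Nat.sInf_mem hSne
  have hmin : ∀ u ∈ par P, cs.length (u₀ * w) ≤ cs.length (u * (u₀ * w)) := by
    intro u hu
    have hmem : cs.length ((u * u₀) * w) ∈ {n : ℕ | ∃ u ∈ par P, cs.length (u * w) = n} :=
      ⟨u * u₀, mul_mem hu hu₀, rfl⟩
    have h2 := Nat.sInf_le hmem
    rw [← mul_assoc]
    omega
  refine ⟨u₀⁻¹, u₀ * w, inv_mem hu₀, by rw [← mul_assoc]; simp, hmin, ?_⟩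
  have hadd := length_par_mul_s8 cs hP hmin u₀⁻¹ (inv_mem hu₀)
  rw [← mul_assoc, inv_mul_cancel, one_mul] at hadd
  exact hadd

theorem min_coset_of_no_inv {P : Set W} (hP : P ⊆ simpleSet cs) {d : W}
    (h : ∀ t : W, cs.IsReflection t → t ∈ par P → ¬ cs.length (t * d) < cs.length d) :
    ∀ u ∈ par P, cs.length d ≤ cs.length (u * d) := by
  obtain ⟨a, d', ha, hdec, hmin, hadd⟩ := exists_coset_decomp cs hP d
  have ha1 : a = 1 := by
    by_contra hane
    obtain ⟨i, hiP, hdesc⟩ := exists_simple_descent_of_mem_par cs hP ha hane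
    have hlen : cs.length (cs.simple i * a) = cs.length a - 1 ∧ 1 ≤ cs.length a := by
      rcases cs.length_simple_mul a i with hh | hh
      · omega
      · constructor
        · omega
        · have := cs.length_eq_zero_iff (w := a)
          rcases Nat.eq_zero_or_pos (cs.length a) with h0 | h1
          · exact absurd (this.mp h0) hane
          · omega
    have hsa : cs.simple i * a ∈ par P := mul_mem (Subgroup.subset_closure hiP) ha
    have hadd2 := length_par_mul_s8 cs hP hmin (cs.simple i * a) hsa
    have hadd3 := length_par_mul_s8 cs hP hmin a ha
    have : cs.length (cs.simple i * d) < cs.length d := by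
      have e1 : cs.simple i * d = (cs.simple i * a) * d' := by rw [hdec, mul_assoc]
      rw [e1, hadd2, hadd, ← hadd3]
      omega
    exact h (cs.simple i) (cs.isReflection_simple i) (Subgroup.subset_closure hiP) this
  rw [ha1, one_mul] at hdec
  rw [← hdec] at hmin
  exact hmin

theorem length_par_mul_of_no_inv {P : Set W} (hP : P ⊆ simpleSet cs) {d : W}
    (h : ∀ t : W, cs.IsReflection t → t ∈ par P → ¬ cs.length (t * d) < cs.length d) :
    ∀ u ∈ par P, cs.length (u * d) = cs.length u + cs.length d :=
  length_par_mul_s8 cs hP (min_coset_of_no_inv cs hP h)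


/-! ### Longest elements -/

theorem exists_isLongest {P : Set W} (hfin : ((par P : Set W)).Finite) :
    ∃ x₀, IsLongest cs P x₀ := by
  obtain ⟨x₀, hx₀, hmax⟩ := Set.exists_max_image (par P : Set W) cs.length hfin
    ⟨1, one_mem _⟩
  exact ⟨x₀, hx₀, hmax⟩

theorem longest_isLongest {P : Set W} (hex : ∃ w, IsLongest cs P w) :
    IsLongest cs P (longest cs P) := by
  unfold longest
  split
  · next h => exact h.choose_spec
  · next h => exact absurd hex h

theorem isLongest_refl_inv_left {P : Set W} (hP : P ⊆ simpleSet cs) {x₀ : W}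
    (hx₀ : IsLongest cs P x₀) {t : W} (ht : cs.IsReflection t) (htm : t ∈ par P) :
    cs.length (t * x₀) < cs.length x₀ := by
  have hmem : t * x₀ ∈ par P := mul_mem htm hx₀.1
  have hle := hx₀.2 _ hmem
  have hne := ht.length_mul_right_ne x₀
  omega

theorem isLongest_refl_inv_right {P : Set W} (hP : P ⊆ simpleSet cs) {x₀ : W}
    (hx₀ : IsLongest cs P x₀) {t : W} (ht : cs.IsReflection t) (htm : t ∈ par P) :
    cs.length (x₀ * t) < cs.length x₀ := by
  have hmem : x₀ * t ∈ par P := mul_mem hx₀.1 htm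
  have hle := hx₀.2 _ hmem
  have hne := ht.length_mul_left_ne x₀
  omega

theorem invSet_isLongest {P : Set W} (hP : P ⊆ simpleSet cs) {x₀ : W}
    (hx₀ : IsLongest cs P x₀) :
    invSet cs x₀ = {t | cs.IsReflection t ∧ t ∈ par P} := by
  ext t
  constructor
  · rintro ⟨ht, hlt⟩
    exact ⟨ht, invSet_subset_par cs hP hx₀.1 ⟨ht, hlt⟩⟩
  · rintro ⟨ht, htm⟩
    exact ⟨ht, isLongest_refl_inv_left cs hP hx₀ ht htm⟩

theorem isLongest_inv {P : Set W} {x₀ : W} (hx₀ : IsLongest cs P x₀) :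
    IsLongest cs P x₀⁻¹ := by
  refine ⟨inv_mem hx₀.1, fun u hu => ?_⟩
  rw [cs.length_inv]
  exact hx₀.2 u hu

theorem length_mul_isLongest {P : Set W} (hP : P ⊆ simpleSet cs) {x₀ : W}
    (hx₀ : IsLongest cs P x₀) {y : W} (hy : y ∈ par P) :
    cs.length (y * x₀) + cs.length y = cs.length x₀ := by
  have hset : invSet cs (y * x₀) = {t | cs.IsReflection t ∧ t ∈ par P} \ invSet cs y := by
    ext t
    by_cases ht : cs.IsReflection t
    · have hconj : cs.IsReflection (y⁻¹ * t * y) := by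
        have := ht.conj y⁻¹
        rwa [inv_inv] at this
      have hnn : nn cs (y * x₀) t = nn cs y t + nn cs x₀ (y⁻¹ * t * y) := nn_mul cs y x₀ t
      by_cases hmem : t ∈ par P
      · have hconjmem : y⁻¹ * t * y ∈ par P := mul_mem (mul_mem (inv_mem hy) hmem) hy
        have h1 : nn cs x₀ (y⁻¹ * t * y) = 1 :=
          nn_eq_one_of_length_lt cs hconj _
            (isLongest_refl_inv_left cs hP hx₀ hconj hconjmem)
        constructor
        · intro htin
          have := (mem_invSet_iff cs ht _).mp htin
          rw [hnn, h1] at this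
          refine ⟨⟨ht, hmem⟩, fun hinvy => ?_⟩
          have h2 := (mem_invSet_iff cs ht _).mp hinvy
          rw [h2] at this
          exact absurd this (by decide)
        · rintro ⟨⟨_, _⟩, hnot⟩
          rw [mem_invSet_iff cs ht, hnn, h1]
          have h2 : nn cs y t = 0 := by
            by_contra hne
            have : nn cs y t = 1 := by
              have hall : ∀ x : ZMod 2, x ≠ 0 → x = 1 := by decide
              exact hall _ hne
            exact hnot ((mem_invSet_iff cs ht _).mpr this)
          rw [h2, zero_add]
      · constructor
        · intro htin
          exfalso
          have h0 := invSet_subset_par cs hP (mul_mem hy hx₀.1) htin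
          -- t ∈ par P, contradiction... need invSet (y*x₀) ⊆ par P
          exact hmem h0
        · rintro ⟨⟨_, hm⟩, _⟩
          exact absurd hm hmem
    · constructor
      · rintro ⟨h, _⟩
        exact absurd h ht
      · rintro ⟨⟨h, _⟩, _⟩
        exact absurd h ht
  have hsub : invSet cs y ⊆ {t | cs.IsReflection t ∧ t ∈ par P} := by
    rintro t ⟨ht, hlt⟩
    exact ⟨ht, invSet_subset_par cs hP hy ⟨ht, hlt⟩⟩
  have hfin : ({t | cs.IsReflection t ∧ t ∈ par P} : Set W).Finite := by
    rw [← invSet_isLongest cs hP hx₀]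
    exact invSet_finite cs x₀
  have hcard := Set.ncard_diff_add_ncard_of_subset hsub hfin
  rw [← hset] at hcard
  rw [← invSet_isLongest cs hP hx₀] at hcard
  rw [invSet_ncard, invSet_ncard, invSet_ncard] at hcard
  exact hcard

theorem length_isLongest_mul {P : Set W} (hP : P ⊆ simpleSet cs) {x₀ : W}
    (hx₀ : IsLongest cs P x₀) {y : W} (hy : y ∈ par P) :
    cs.length (x₀ * y) + cs.length y = cs.length x₀ := by
  have := length_mul_isLongest cs hP (isLongest_inv cs hx₀) (inv_mem hy)
  rw [← cs.length_inv (x₀ * y), mul_inv_rev, ← cs.length_inv y, ← cs.length_inv x₀] at *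
  simpa using this

theorem eq_isLongest_of_descents {P : Set W} (hP : P ⊆ simpleSet cs) {x₀ : W}
    (hx₀ : IsLongest cs P x₀) {x : W} (hx : x ∈ par P)
    (hdesc : ∀ i : B, cs.simple i ∈ P → cs.length (cs.simple i * x) < cs.length x) :
    x = x₀ := by
  by_contra hne
  have hz : x₀ * x⁻¹ ∈ par P := mul_mem hx₀.1 (inv_mem hx)
  have hzne : x₀ * x⁻¹ ≠ 1 := by
    intro h1
    have : x₀ = x := by
      have := congrArg (fun z => z * x) h1
      simpa [mul_assoc] using this
    exact hne this.symm
  -- right descent of z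
  obtain ⟨i, hiP, hdesci⟩ := exists_simple_descent_of_mem_par cs hP (inv_mem hz)
    (fun h => hzne (by rw [← inv_inv (x₀ * x⁻¹), h, inv_one]))
  -- hdesci : ℓ (s i * (x₀ * x⁻¹)⁻¹) < ℓ ((x₀ * x⁻¹)⁻¹)
  have hright : cs.length ((x₀ * x⁻¹) * cs.simple i) < cs.length (x₀ * x⁻¹) := by
    have h1 : cs.length ((x₀ * x⁻¹) * cs.simple i) = cs.length (cs.simple i * (x₀ * x⁻¹)⁻¹) := by
      rw [← cs.length_inv, mul_inv_rev, cs.inv_simple]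
    have h2 : cs.length (x₀ * x⁻¹) = cs.length ((x₀ * x⁻¹)⁻¹) := (cs.length_inv _).symm
    omega
  -- (x₀ * x⁻¹) * s i = x₀ * (s i * x)⁻¹
  have heq : (x₀ * x⁻¹) * cs.simple i = x₀ * (cs.simple i * x)⁻¹ := by
    rw [mul_inv_rev, cs.inv_simple, ← mul_assoc]
  have hsx : cs.simple i * x ∈ par P := mul_mem (Subgroup.subset_closure hiP) hx
  have e1 := length_isLongest_mul cs hP hx₀ (inv_mem hsx)
  have e2 := length_isLongest_mul cs hP hx₀ (inv_mem hx)
  rw [cs.length_inv] at e1 e2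
  rw [heq] at hright
  have hdi := hdesc i hiP
  have hsi : cs.length (cs.simple i * x) = cs.length x - 1 ∧ 1 ≤ cs.length x := by
    rcases cs.length_simple_mul x i with h | h
    · omega
    · constructor
      · omega
      · by_contra h0
        have : cs.length x = 0 := by omega
        omega
  omega

theorem isLongest_mul_self {P : Set W} (hP : P ⊆ simpleSet cs) {x₀ : W}
    (hx₀ : IsLongest cs P x₀) : x₀⁻¹ = x₀ := by
  apply eq_isLongest_of_descents cs hP hx₀ (inv_mem hx₀.1)
  intro i hiP
  have h1 : cs.length (cs.simple i * x₀⁻¹) = cs.length (x₀ * cs.simple i) := by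
    rw [← cs.length_inv, mul_inv_rev, cs.inv_simple, inv_inv]
  rw [h1, cs.length_inv]
  exact isLongest_refl_inv_right cs hP hx₀ (cs.isReflection_simple i) (Subgroup.subset_closure hiP)


/-! ### Main theorem -/

theorem nn_eq_zero_of_not_mem_par {P : Set W} (hP : P ⊆ simpleSet cs) {x t : W}
    (hx : x ∈ par P) (ht : cs.IsReflection t) (htm : t ∉ par P) : nn cs x t = 0 := by
  by_contra hne
  have h1 : nn cs x t = 1 := by
    have hall : ∀ z : ZMod 2, z ≠ 0 → z = 1 := by decide
    exact hall _ hne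
  have hlt := length_lt_of_nn_eq_one cs ht x h1
  exact htm (invSet_subset_par cs hP hx ⟨ht, hlt⟩)

theorem length_tilde_mul_dichotomy' (Sg : Set W) (hSg : GoodSubset cs Sg)
    (w s : W) (hw : w ∈ relW cs Sg) (hs : s ∈ relS cs Sg) :
    Xor' (cs.length (s * w) = cs.length w + cs.length s)
      (cs.length (s * w) + cs.length s = cs.length w) := by
  classical
  obtain ⟨hSgS, hSgfin, _hnorm⟩ := hSg
  obtain ⟨hwconj, hwinv⟩ := hw
  obtain ⟨s₀, hs₀mem, rfl⟩ := hs
  obtain ⟨⟨hs₀S, hs₀nSg⟩, hJfin⟩ := hs₀mem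
  set J : Set W := Sg ∪ {s₀} with hJ
  have hJS : J ⊆ simpleSet cs := by
    rw [hJ]
    intro x hx
    rcases hx with h | h
    · exact hSgS h
    · rw [h]
      exact hs₀S
  have hSgJ : (par Sg : Set W) ⊆ (par J : Set W) :=
    Subgroup.closure_mono Set.subset_union_left
  -- longest elements
  have hvL : IsLongest cs Sg (longest cs Sg) :=
    longest_isLongest cs (exists_isLongest cs hSgfin)
  have hw₀L : IsLongest cs J (longest cs J) :=
    longest_isLongest cs (exists_isLongest cs hJfin)
  set v := longest cs Sg with hvdef
  set w₀ := longest cs J with hw₀def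
  have hst : tilde cs Sg s₀ = w₀ * v := rfl
  obtain ⟨b₀, hb₀⟩ := hs₀S
  -- s₀ is a reflection of length 1, not in par Sg
  have hs₀refl : cs.IsReflection s₀ := by
    rw [← hb₀]
    exact cs.isReflection_simple b₀
  have hs₀len : cs.length s₀ = 1 := by rw [← hb₀]; exact cs.length_simple b₀
  have hs₀npar : s₀ ∉ par Sg := by
    intro hmem
    exact hs₀nSg (mem_of_mem_par_length_one cs hSgS hmem hs₀len)
  have hs₀J : s₀ ∈ par J := Subgroup.subset_closure (by rw [hJ]; right; rfl)
  have hvJ : v ∈ par J := hSgJ hvL.1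
  have hsJ : w₀ * v ∈ par J := mul_mem hw₀L.1 hvJ
  -- length of s-tilde
  have hslen : cs.length (w₀ * v) + cs.length v = cs.length w₀ :=
    length_isLongest_mul cs hJS hw₀L hvJ
  have hslen_pos : 1 ≤ cs.length (w₀ * v) := by
    -- ℓ (v * s₀) = ℓ v + 1 ≤ ℓ w₀
    have h1 : ¬ cs.length (v * s₀) < cs.length v := by
      intro hlt
      have h2 : cs.length ((v * s₀ * v⁻¹) * v) < cs.length v := by
        have : (v * s₀ * v⁻¹) * v = v * s₀ := by group
        rwa [this]
      have h3 : cs.IsReflection (v * s₀ * v⁻¹) := hs₀refl.conj v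
      have h4 := invSet_subset_par cs hSgS hvL.1 ⟨h3, h2⟩
      have h5 : s₀ ∈ par Sg := by
        have : s₀ = v⁻¹ * (v * s₀ * v⁻¹) * v := by group
        rw [this]
        exact mul_mem (mul_mem (inv_mem hvL.1) h4) hvL.1
      exact hs₀npar h5
    have h6 : v * s₀ ∈ par J := mul_mem hvJ hs₀J
    have h7 := hw₀L.2 _ h6
    have h8 : cs.length (v * s₀) = cs.length v + 1 ∨ cs.length (v * s₀) + 1 = cs.length v := by
      rw [← hb₀]
      exact cs.length_mul_simple v b₀
    omega
  -- coset decomposition of w along J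
  obtain ⟨a, d, ha, hdec, hdmin, hadd⟩ := exists_coset_decomp cs hJS w
  rcases eq_or_ne a 1 with rfl | hane
  · -- CASE A
    rw [one_mul] at hdec
    have hA : cs.length (w₀ * v * d) = cs.length (w₀ * v) + cs.length d :=
      length_par_mul_s8 cs hJS hdmin _ hsJ
    left
    have hassoc : tilde cs Sg s₀ * w = w₀ * v * d := by rw [hst, hdec]
    have hlw : cs.length w = cs.length d := by rw [hdec]
    constructor
    · rw [hassoc, hA, hst, hlw]
      omega
    · intro hB
      rw [hassoc, hA, hst, hlw] at hB
      omega
  · -- CASE B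
    -- a has no Sg-inversions
    have haJ : a ∈ par J := ha
    have hinvw : ∀ t : W, cs.IsReflection t → t ∈ par Sg → ¬ cs.length (t * w) < cs.length w := by
      intro t ht htm hlt
      have : t ∈ invSet cs w ∩ parRefl Sg := by
        constructor
        · exact ⟨ht, hlt⟩
        · rw [parRefl_eq cs hSgS]
          exact ⟨ht, htm⟩
      rw [hwinv] at this
      exact this
    have haNoInv : ∀ t : W, cs.IsReflection t → t ∈ par Sg → ¬ cs.length (t * a) < cs.length a := by
      intro t ht htm hlt
      have htJ : t ∈ par J := hSgJ htm
      have hta : t * a ∈ par J := mul_mem htJ haJ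
      have h1 : cs.length (t * w) = cs.length (t * a) + cs.length d := by
        have : t * w = (t * a) * d := by rw [hdec, mul_assoc]
        rw [this]
        exact length_par_mul_s8 cs hJS hdmin _ hta
      have h2 := length_par_mul_s8 cs hJS hdmin a haJ
      apply hinvw t ht htm
      omega
    -- descent of a is s₀
    obtain ⟨i, hiJ, hidesc⟩ := exists_simple_descent_of_mem_par cs hJS haJ hane
    have his₀ : cs.simple i = s₀ := by
      rcases hiJ with h | h
      · exfalso
        exact haNoInv (cs.simple i) (cs.isReflection_simple i) (Subgroup.subset_closure h) hidesc
      · exact h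
    have hs₀a : cs.length (s₀ * a) < cs.length a := by rw [← his₀]; exact hidesc
    have hnn_a_s₀ : nn cs a s₀ = 1 := nn_eq_one_of_length_lt cs hs₀refl a hs₀a
    -- conjugation by w
    have hwc1 : ∀ u, u ∈ par Sg → w * u * w⁻¹ ∈ par Sg := by
      intro u hu
      have : w * u * w⁻¹ ∈ (fun u => w * u * w⁻¹) '' (par Sg : Set W) :=
        Set.mem_image_of_mem _ hu
      rwa [hwconj] at this
    have hwc2 : ∀ u, u ∈ par Sg → w⁻¹ * u * w ∈ par Sg := by
      intro u hu
      have hu' : u ∈ (fun u => w * u * w⁻¹) '' (par Sg : Set W) := by rw [hwconj]; exact hu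
      obtain ⟨x, hx, hxe⟩ := hu'
      have : w⁻¹ * u * w = x := by
        rw [← hxe]
        group
      rw [this]
      exact hx
    -- conjugation by d maps par Sg into par J with simple images
    set Sg₁ : Set W := {x | ∃ σ ∈ Sg, x = d * σ * d⁻¹} with hSg₁def
    have hd_eq : d = a⁻¹ * w := by rw [hdec]; group
    have hconj_d : ∀ u, u ∈ par Sg → d * u * d⁻¹ = a⁻¹ * (w * u * w⁻¹) * a := by
      intro u _
      rw [hd_eq]
      group
    have hSg₁J : Sg₁ ⊆ J := by
      rintro x ⟨σ, hσ, rfl⟩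
      have hσpar : σ ∈ par Sg := Subgroup.subset_closure hσ
      have hσJ : σ ∈ par J := hSgJ hσpar
      have hmem : d * σ * d⁻¹ ∈ par J := by
        rw [hconj_d σ hσpar]
        exact mul_mem (mul_mem (inv_mem haJ) (hSgJ (hwc1 σ hσpar))) haJ
      -- length 1
      have hσsimple : ∃ b, cs.simple b = σ := hSgS hσ
      obtain ⟨b, hb⟩ := hσsimple
      have hσlen : cs.length σ = 1 := by rw [← hb]; exact cs.length_simple b
      have hσne : σ ≠ 1 := by
        intro h1
        rw [h1, cs.length_one] at hσlen
        omega
      have hconjne : d * σ * d⁻¹ ≠ 1 := by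
        intro h1
        apply hσne
        have hσeq : σ = d⁻¹ * (d * σ * d⁻¹) * d := by group
        rw [hσeq, h1]
        simp
      have hlen1 : cs.length (d * σ * d⁻¹) = 1 := by
        have e1 : cs.length (d * σ) = cs.length (d * σ * d⁻¹) + cs.length d := by
          have hthis : d * σ = (d * σ * d⁻¹) * d := by group
          conv_lhs => rw [hthis]
          exact length_par_mul_s8 cs hJS hdmin _ hmem
        have e2 : cs.length (d * σ) = cs.length d + 1 ∨ cs.length (d * σ) + 1 = cs.length d := by
          rw [← hb]
          exact cs.length_mul_simple d b
        have e3 : cs.length (d * σ * d⁻¹) ≠ 0 := by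
          intro h0
          exact hconjne (cs.length_eq_zero_iff.mp h0)
        omega
      exact mem_of_mem_par_length_one cs hJS hmem hlen1
    have hSg₁S : Sg₁ ⊆ simpleSet cs := fun x hx => hJS (hSg₁J hx)
    -- conjugation maps par Sg ↔ par Sg₁
    have hmap1 : ∀ x, x ∈ par Sg → d * x * d⁻¹ ∈ par Sg₁ := by
      intro x hx
      induction hx using Subgroup.closure_induction with
      | mem y hy => exact Subgroup.subset_closure ⟨y, hy, rfl⟩

      | one => simpa using one_mem _
      | mul y z _ _ hy hz =>
        have : d * (y * z) * d⁻¹ = (d * y * d⁻¹) * (d * z * d⁻¹) := by group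
        rw [this]
        exact mul_mem hy hz
      | inv y _ hy =>
        have : d * y⁻¹ * d⁻¹ = (d * y * d⁻¹)⁻¹ := by group
        rw [this]
        exact inv_mem hy
    have hmap2 : ∀ x, x ∈ par Sg₁ → d⁻¹ * x * d ∈ par Sg := by
      intro x hx
      induction hx using Subgroup.closure_induction with
      | mem y hy =>
        obtain ⟨σ, hσ, rfl⟩ := hy
        have : d⁻¹ * (d * σ * d⁻¹) * d = σ := by group
        rw [this]
        exact Subgroup.subset_closure hσ
      | one => simpa using one_mem _
      | mul y z _ _ hy hz =>
        have : d⁻¹ * (y * z) * d = (d⁻¹ * y * d) * (d⁻¹ * z * d) := by group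
        rw [this]
        exact mul_mem hy hz
      | inv y _ hy =>
        have : d⁻¹ * y⁻¹ * d = (d⁻¹ * y * d)⁻¹ := by group
        rw [this]
        exact inv_mem hy
    -- conjugation by a
    have hamap : ∀ u, u ∈ par Sg → a⁻¹ * u * a ∈ par Sg₁ := by
      intro u hu
      have h1 : a⁻¹ * u * a = d * (w⁻¹ * u * w) * d⁻¹ := by
        rw [hd_eq]
        group
      rw [h1]
      exact hmap1 _ (hwc2 u hu)
    have hamap2 : ∀ x, x ∈ par Sg₁ → a * x * a⁻¹ ∈ par Sg := by
      intro x hx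
      have h1 : a * x * a⁻¹ = w * (d⁻¹ * x * d) * w⁻¹ := by
        rw [hd_eq]
        group
      rw [h1]
      exact hwc1 _ (hmap2 x hx)
    -- v is an involution
    have hvinv : v⁻¹ = v := isLongest_mul_self cs hSgS hvL
    -- key: nn a (v⁻¹ s₀ v) = nn a s₀ = 1
    have hv₁mem : a⁻¹ * v * a ∈ par Sg₁ := hamap v hvL.1
    have hkey : nn cs a (v⁻¹ * s₀ * v) = 1 := by
      have hcomm : v * a = a * (a⁻¹ * v * a) := by group
      have e1 : nn cs (v * a) s₀ = nn cs v s₀ + nn cs a (v⁻¹ * s₀ * v) := nn_mul cs v a s₀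
      have e2 : nn cs (a * (a⁻¹ * v * a)) s₀
          = nn cs a s₀ + nn cs (a⁻¹ * v * a) (a⁻¹ * s₀ * a) := nn_mul cs a _ s₀
      have hnv : nn cs v s₀ = 0 := nn_eq_zero_of_not_mem_par cs hSgS hvL.1 hs₀refl hs₀npar
      have hnv₁ : nn cs (a⁻¹ * v * a) (a⁻¹ * s₀ * a) = 0 := by
        apply nn_eq_zero_of_not_mem_par cs hSg₁S hv₁mem
        · have := hs₀refl.conj a⁻¹
          rwa [inv_inv] at this
        · intro hmem
          apply hs₀npar
          have : s₀ = a * (a⁻¹ * s₀ * a) * a⁻¹ := by group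
          rw [this]
          exact hamap2 _ hmem
      have hfin : nn cs (v * a) s₀ = 1 := by
        rw [hcomm, e2, hnv₁, add_zero, hnn_a_s₀]
      rw [e1, hnv, zero_add] at hfin
      exact hfin
    -- every J-simple is a left inversion of v * a
    have hnv' : nn cs v s₀ = 0 := nn_eq_zero_of_not_mem_par cs hSgS hvL.1 hs₀refl hs₀npar
    have hva_desc : ∀ i : B, cs.simple i ∈ J →
        cs.length (cs.simple i * (v * a)) < cs.length (v * a) := by
      intro i hiJ'
      have hirefl := cs.isReflection_simple i
      rcases hiJ' with h | h
      · have hipar : cs.simple i ∈ par Sg := Subgroup.subset_closure h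
        have h1 : nn cs v (cs.simple i) = 1 :=
          nn_eq_one_of_length_lt cs hirefl v
            (isLongest_refl_inv_left cs hSgS hvL hirefl hipar)
        have hconjrefl : cs.IsReflection (v⁻¹ * cs.simple i * v) := by
          have := hirefl.conj v⁻¹
          rwa [inv_inv] at this
        have hconjmem : v⁻¹ * cs.simple i * v ∈ par Sg :=
          mul_mem (mul_mem (inv_mem hvL.1) hipar) hvL.1
        have h2 : nn cs a (v⁻¹ * cs.simple i * v) = 0 :=
          (nn_eq_zero_iff cs hconjrefl a).mpr (haNoInv _ hconjrefl hconjmem)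
        have h3 : nn cs (v * a) (cs.simple i) = 1 := by
          rw [nn_mul, h1, h2, add_zero]
        exact length_lt_of_nn_eq_one cs hirefl _ h3
      · have hi : cs.simple i = s₀ := h
        rw [hi]
        have h1 : nn cs (v * a) s₀ = 1 := by
          rw [nn_mul, hnv', hkey, zero_add]
        exact length_lt_of_nn_eq_one cs hs₀refl _ h1
    have hva : v * a = w₀ :=
      eq_isLongest_of_descents cs hJS hw₀L (mul_mem hvJ haJ) hva_desc
    have hadd_va : cs.length (v * a) = cs.length v + cs.length a :=
      length_par_mul_of_no_inv cs hSgS haNoInv v hvL.1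
    have hw₀sq : w₀ * w₀ = 1 := by
      have hinv := isLongest_mul_self cs hJS hw₀L
      calc w₀ * w₀ = w₀⁻¹ * w₀ := by rw [hinv]
        _ = 1 := inv_mul_cancel w₀
    have hsw : tilde cs Sg s₀ * w = d := by
      rw [hst, hdec]
      calc w₀ * v * (a * d) = w₀ * (v * a) * d := by group
        _ = w₀ * w₀ * d := by rw [hva]
        _ = d := by rw [hw₀sq, one_mul]
    have hla : cs.length v + cs.length a = cs.length w₀ := by
      rw [← hadd_va, hva]
    right
    constructor
    · rw [hsw, hst]
      omega
    · intro hA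
      rw [hsw, hst] at hA
      omega

end

variable (cs : CoxeterSystem M W)

/-- for `w ∈ W̃` and `s̃ ∈ S̃`, exactly one of
`ℓ(s̃w) = ℓ(w) + ℓ(s̃)` and `ℓ(s̃w) = ℓ(w) − ℓ(s̃)` holds. -/
theorem length_tilde_mul_dichotomy (Sg : Set W) (hSg : GoodSubset cs Sg)
    (w s : W) (hw : w ∈ relW cs Sg) (hs : s ∈ relS cs Sg) :
    Xor' (cs.length (s * w) = cs.length w + cs.length s)
      (cs.length (s * w) + cs.length s = cs.length w) :=
  length_tilde_mul_dichotomy' cs Sg hSg w s hw hs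

end RelativeCoxeter
end
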